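/- arXiv:2310.05385 — 5 statements merged into one kernel-verified Lean document; each statement's English description precedes it below -/
import Mathlib

section
/- If a hypergraph H = (V, E) is α-acyclic (i.e., admits a join tree), then for every vertex x ∈ V, the hypergraph obtained by removing x from every hyperedge of H is also α-acyclic. -/
variable {V : Type*}

/-- A join tree of a hypergraph with hyperedge collection `E`: a tree (acyclic,
preconnected graph) on the hyperedges such that for every vertex `v`, the set of
nodes whose hyperedges contain `v` induces a connected (preconnected) subgraph. -/
def IsJoinTree (E : Set (Set V)) (T : SimpleGraph E) : Prop :=
  T.IsAcyclic ∧ T.Preconnected ∧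
    ∀ v : V, (T.induce {K : ↥E | v ∈ (K : Set V)}).Preconnected

/-- A hypergraph is α-acyclic if it admits a join tree. -/
def AlphaAcyclic (E : Set (Set V)) : Prop :=
  ∃ T : SimpleGraph E, IsJoinTree E T

/-- Remove a vertex from every hyperedge, discarding emptied hyperedges. -/
def removeVertex (E : Set (Set V)) (x : V) : Set (Set V) :=
  {K' | ∃ K ∈ E, K' = K \ {x} ∧ K' ≠ ∅}

/-- A signed hypergraph `(V, E⁺, E⁻)` is signed-acyclic if for every `S ⊆ E⁻`,
the hypergraph `(V, E⁺ ∪ S)` is α-acyclic. -/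
def SignedAcyclic (Ep En : Set (Set V)) : Prop :=
  ∀ S ⊆ En, AlphaAcyclic (Ep ∪ S)

open SimpleGraph

namespace RV

open scoped Classical

noncomputable section

def junk (x : V) (u : Set V) : Prop := u ⊆ {x}

def isRep (E : Set (Set V)) (x : V) (u : Set V) : Prop :=
  ¬ u ⊆ {x} ∧ (x ∈ u ∨ u ∪ {x} ∉ E)

lemma notmem_of_mem_E' {E : Set (Set V)} {x : V} {A : Set V}
    (hA : A ∈ removeVertex E x) : x ∉ A := by
  obtain ⟨K, _, rfl, _⟩ := hA; simp

lemma ne_empty_of_mem_E' {E : Set (Set V)} {x : V} {A : Set V}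
    (hA : A ∈ removeVertex E x) : A ≠ ∅ := by
  obtain ⟨K, _, rfl, h⟩ := hA; exact h

lemma mem_E_of_mem_E' {E : Set (Set V)} {x : V} {A : Set V}
    (hA : A ∈ removeVertex E x) (h : A ∪ {x} ∉ E) : A ∈ E := by
  obtain ⟨K, hK, rfl, hne⟩ := hA
  by_cases hx : x ∈ K
  · have : K \ {x} ∪ {x} = K := by
      ext a; by_cases hax : a = x <;> simp [hax, hx]
    rw [this] at h; exact absurd hK h
  · have : K \ {x} = K := by
      ext a
      by_cases hax : a = x
      · subst hax; simp [hx]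
      · simp [hax]
    rwa [this]

lemma diff_mem_E' {E : Set (Set V)} {x : V} {r : Set V} (hr : r ∈ E) (h : ¬ r ⊆ {x}) :
    r \ {x} ∈ removeVertex E x := by
  refine ⟨r, hr, rfl, ?_⟩
  intro he
  exact h (by intro a ha; by_contra hax; exact absurd (Set.mem_diff_of_mem ha hax) (by simp [he]))

/-- Bundled data: a join tree of `E` together with a removed vertex `x`,
assuming the reduced hypergraph is nonempty. -/
structure JT (V : Type*) where
  E : Set (Set V)
  x : V
  T : SimpleGraph ↥E
  hac : T.IsAcyclic
  hpre : T.Preconnected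
  hcon : ∀ v : V, (T.induce {K : ↥E | v ∈ (K : Set V)}).Preconnected
  hne : (removeVertex E x).Nonempty

namespace JT

variable (S : JT V)

/-- Boolean test for representatives. -/
def repB (u : ↥S.E) : Bool := decide (isRep S.E S.x u.val)

/-- Boolean test for non-junk. -/
def njB (u : ↥S.E) : Bool := decide (¬ junk S.x u.val)

lemma repB_eq_iff (u : ↥S.E) : S.repB u = true ↔ isRep S.E S.x u.val := by simp [repB]

lemma njB_eq_iff (u : ↥S.E) : S.njB u = true ↔ ¬ junk S.x u.val := by simp [njB]

/-- chosen path between two vertices -/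
def pathW (a b : ↥S.E) : S.T.Walk a b := ((S.hpre a b).some.toPath : S.T.Path a b).val

lemma pathW_isPath (a b : ↥S.E) : (S.pathW a b).IsPath := ((S.hpre a b).some.toPath).2

lemma pathW_eq (a b : ↥S.E) (p : S.T.Walk a b) (hp : p.IsPath) :
    S.pathW a b = p :=
  congrArg Subtype.val (S.hac.path_unique ((S.hpre a b).some.toPath) ⟨p, hp⟩)

/-- the companion vertex `u ∪ {x}` -/
def ux (u : ↥S.E) (h : u.val ∪ {S.x} ∈ S.E) : ↥S.E := ⟨u.val ∪ {S.x}, h⟩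

/-- a fixed global representative -/
def r0 : ↥S.E :=
  if h : S.hne.choose ∪ {S.x} ∈ S.E then ⟨S.hne.choose ∪ {S.x}, h⟩
  else ⟨S.hne.choose, mem_E_of_mem_E' S.hne.choose_spec h⟩

lemma isRep_r0 : isRep S.E S.x S.r0.val := by
  have h1 := notmem_of_mem_E' S.hne.choose_spec
  have h2 := ne_empty_of_mem_E' S.hne.choose_spec
  obtain ⟨a, ha⟩ := Set.nonempty_iff_ne_empty.mpr h2
  have hax : a ≠ S.x := fun h => h1 (h ▸ ha)
  unfold r0
  split
  · exact ⟨fun hs => hax (hs (by simp [ha])), Or.inl (by simp)⟩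
  · next h =>
    exact ⟨fun hs => hax (hs ha), Or.inr h⟩

lemma isRep_ux (u : ↥S.E) (h : u.val ∪ {S.x} ∈ S.E) (hj : ¬ junk S.x u.val) :
    isRep S.E S.x (S.ux u h).val := by
  obtain ⟨a, ha, hax⟩ := Set.not_subset.mp hj
  refine ⟨fun hs => ?_, Or.inl (by simp [ux])⟩
  exact hax (by simpa using hs (Set.mem_union_left _ ha))

/-- class map for non-junk vertices -/
def cNJ (u : ↥S.E) : ↥S.E :=
  if h : junk S.x u.val ∨ S.x ∈ u.val ∨ u.val ∪ {S.x} ∉ S.E then u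
  else
    ((S.pathW u (S.ux u (not_not.mp (fun hn => h (Or.inr (Or.inr hn)))))).support.find?
      S.repB).get (by
      rw [List.find?_isSome]
      refine ⟨S.ux u (not_not.mp (fun hn => h (Or.inr (Or.inr hn)))),
        SimpleGraph.Walk.end_mem_support _, ?_⟩
      exact (S.repB_eq_iff _).mpr (S.isRep_ux u _ (fun hj => h (Or.inl hj))))

def firstNJ (j : ↥S.E) : ↥S.E :=
  ((S.pathW j S.r0).support.find? S.njB).get (by
    rw [List.find?_isSome]
    exact ⟨S.r0, SimpleGraph.Walk.end_mem_support _, (S.njB_eq_iff _).mpr S.isRep_r0.1⟩)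

def c (u : ↥S.E) : ↥S.E :=
  if junk S.x u.val then S.cNJ (S.firstNJ u) else S.cNJ u

lemma cNJ_rep (u : ↥S.E) (h : isRep S.E S.x u.val) : S.cNJ u = u := by
  unfold cNJ; exact dif_pos (Or.inr h.2)

lemma cNJ_eq_some (u : ↥S.E) (hnj : ¬ junk S.x u.val) (hxu : S.x ∉ u.val)
    (hUE : u.val ∪ {S.x} ∈ S.E) :
    (S.pathW u (S.ux u hUE)).support.find? S.repB = some (S.cNJ u) := by
  unfold cNJ
  rw [dif_neg (by push_neg; exact ⟨hnj, hxu, hUE⟩)]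
  exact (Option.some_get _).symm

lemma isRep_cNJ (u : ↥S.E) (hnj : ¬ junk S.x u.val) : isRep S.E S.x (S.cNJ u).val := by
  by_cases h : S.x ∈ u.val ∨ u.val ∪ {S.x} ∉ S.E
  · rw [show S.cNJ u = u from by unfold cNJ; exact dif_pos (Or.inr h)]
    exact ⟨hnj, h⟩
  · push_neg at h
    have h1 := S.cNJ_eq_some u hnj h.1 h.2
    exact (S.repB_eq_iff _).mp (List.find?_some h1)

lemma not_junk_firstNJ (j : ↥S.E) : ¬ junk S.x (S.firstNJ j).val := by
  have h1 : S.njB (S.firstNJ j) = true :=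
    List.find?_some (Option.some_get _).symm
  exact (S.njB_eq_iff _).mp h1

lemma isRep_c (u : ↥S.E) : isRep S.E S.x (S.c u).val := by
  unfold c
  by_cases h : junk S.x u.val
  · rw [if_pos h]; exact S.isRep_cNJ _ (S.not_junk_firstNJ u)
  · rw [if_neg h]; exact S.isRep_cNJ u h

lemma c_rep (u : ↥S.E) (h : isRep S.E S.x u.val) : S.c u = u := by
  unfold c; rw [if_neg (show ¬ junk S.x u.val from h.1)]; exact S.cNJ_rep u h

lemma c_idem (u : ↥S.E) : S.c (S.c u) = S.c u :=
  S.c_rep _ (S.isRep_c u)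

lemma c_nonjunk (u : ↥S.E) (h : ¬ junk S.x u.val) : S.c u = S.cNJ u := by
  unfold c; exact if_neg h

/-- walks in an induced subgraph give reachability in any graph admitting the
relevant adjacencies -/
lemma reach_of_induced {Q : Set ↥S.E} {G' : SimpleGraph ↥S.E}
    (hG : ∀ z w : ↥S.E, z ∈ Q → w ∈ Q → S.T.Adj z w → G'.Adj z w) :
    ∀ {u v : ↥Q}, (S.T.induce Q).Reachable u v → G'.Reachable u.val v.val := by
  intro u v hr
  obtain ⟨W⟩ := hr
  induction W with
  | nil => exact Reachable.refl _
  | @cons a b d h W ih =>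
      have hab : S.T.Adj a.val b.val := h
      exact Reachable.trans ((hG a.val b.val a.2 b.2 hab).reachable) ih

lemma support_pathW_subset (v : V) (a b : ↥S.E) (ha : v ∈ a.val) (hb : v ∈ b.val) :
    ∀ w ∈ (S.pathW a b).support, v ∈ w.val := by
  classical
  set Q : Set ↥S.E := {K : ↥S.E | v ∈ (K : Set V)} with hQ
  obtain ⟨W⟩ := S.hcon v ⟨a, ha⟩ ⟨b, hb⟩
  let Wm : S.T.Walk a b := W.map (SimpleGraph.Embedding.induce Q).toHom
  have hsupp : ∀ w ∈ Wm.support, v ∈ w.val := by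
    intro w hw
    rw [show Wm.support = _ from SimpleGraph.Walk.support_map _ _] at hw
    obtain ⟨z, hz, rfl⟩ := List.mem_map.mp hw
    exact z.2
  have hval : S.pathW a b = (Wm.toPath : S.T.Path a b).val :=
    congrArg Subtype.val (S.hac.path_unique ((S.hpre a b).some.toPath) _)
  intro w hw
  rw [hval] at hw
  exact hsupp w (SimpleGraph.Walk.support_toPath_subset _ hw)

lemma second_eq {m y y' b b' : ↥S.E} (h : S.T.Adj m y) (h' : S.T.Adj m y')
    (q : S.T.Walk y b) (q' : S.T.Walk y' b')
    (hq : (SimpleGraph.Walk.cons h q).IsPath) (hq' : (SimpleGraph.Walk.cons h' q').IsPath)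
    (hb : S.x ∈ b.val) (hb' : S.x ∈ b'.val) (hm : S.x ∉ m.val) : y = y' := by
  by_contra hyy
  set e : Sym2 ↥S.E := s(m, y) with he
  have hmq : m ∉ q.support := ((SimpleGraph.Walk.cons_isPath_iff h q).mp hq).2
  have hmq' : m ∉ q'.support := ((SimpleGraph.Walk.cons_isPath_iff h' q').mp hq').2
  have rA : (S.T.deleteEdges {e}).Reachable m y' := by
    refine SimpleGraph.Adj.reachable ?_
    rw [SimpleGraph.deleteEdges_adj]
    refine ⟨h', ?_⟩
    simp only [Set.mem_singleton_iff, he, Sym2.eq_iff]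
    rintro (⟨-, rfl⟩ | ⟨rfl, rfl⟩)
    · exact hyy rfl
    · exact (S.T.irrefl h)
  have rB : (S.T.deleteEdges {e}).Reachable y' b' :=
    ⟨q'.toDeleteEdge e (fun hee => hmq' (q'.fst_mem_support_of_mem_edges hee))⟩
  have rC : (S.T.deleteEdges {e}).Reachable b' b := by
    refine S.reach_of_induced (Q := {K : ↥S.E | S.x ∈ K.val}) ?_
      (u := ⟨b', hb'⟩) (v := ⟨b, hb⟩) (S.hcon S.x ⟨b', hb'⟩ ⟨b, hb⟩)
    intro z w hz hw hzw
    rw [SimpleGraph.deleteEdges_adj]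
    refine ⟨hzw, ?_⟩
    simp only [Set.mem_singleton_iff, he, Sym2.eq_iff]
    rintro (⟨rfl, rfl⟩ | ⟨rfl, rfl⟩)
    · exact hm hz
    · exact hm hw
  have rD : (S.T.deleteEdges {e}).Reachable b y :=
    ⟨(q.toDeleteEdge e (fun hee => hmq (q.fst_mem_support_of_mem_edges hee))).reverse⟩
  have rtot : (S.T.deleteEdges {e}).Reachable m y :=
    ((rA.trans rB).trans rC).trans rD
  have hbr := (SimpleGraph.isAcyclic_iff_forall_edge_isBridge.mp S.hac)
    (S.T.mem_edgeSet.mpr h)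
  rw [SimpleGraph.isBridge_iff] at hbr
  exact hbr rtot

lemma keyM : ∀ (n : ℕ) (m b b' : ↥S.E) (p : S.T.Walk m b) (p' : S.T.Walk m b'),
    p.length ≤ n → p.IsPath → p'.IsPath → S.x ∈ b.val → S.x ∈ b'.val → S.x ∉ m.val →
    (∀ w ∈ p.support, ¬ junk S.x w.val) → (∀ w ∈ p'.support, ¬ junk S.x w.val) →
    p.support.find? S.repB = p'.support.find? S.repB := by
  intro n
  induction n with
  | zero =>
      intro m b b' p p' hlen _ _ hb _ hm _ _
      cases p with
      | nil => exact absurd hb hm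
      | cons h q => simp [SimpleGraph.Walk.length_cons] at hlen
  | succ n ih =>
      intro m b b' p p' hlen hp hp' hb hb' hm hsup hsup'
      cases p with
      | nil => exact absurd hb hm
      | @cons _ y _ h q =>
        cases p' with
        | nil => exact absurd hb' hm
        | @cons _ y' _ h' q' =>
          have hyy : y = y' := S.second_eq h h' q q' hp hp' hb hb' hm
          subst hyy
          rw [SimpleGraph.Walk.support_cons, SimpleGraph.Walk.support_cons]
          by_cases hrm : S.repB m = true
          · rw [List.find?_cons_of_pos hrm, List.find?_cons_of_pos hrm]
          · rw [List.find?_cons_of_neg (by simpa using hrm),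
              List.find?_cons_of_neg (by simpa using hrm)]
            by_cases hxy : S.x ∈ y.val
            · have hys : y ∈ (SimpleGraph.Walk.cons h q).support := by
                rw [SimpleGraph.Walk.support_cons]
                exact List.mem_cons_of_mem _ q.start_mem_support
              have hrepy : S.repB y = true :=
                (S.repB_eq_iff y).mpr ⟨hsup y hys, Or.inl hxy⟩
              rw [q.support_eq_cons, q'.support_eq_cons,
                List.find?_cons_of_pos hrepy, List.find?_cons_of_pos hrepy]
            · refine ih y b b' q q'
                (by simpa [SimpleGraph.Walk.length_cons] using hlen)
                hp.of_cons hp'.of_cons hb hb' hxy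
                (fun w hw => hsup w (by
                  rw [SimpleGraph.Walk.support_cons]; exact List.mem_cons_of_mem _ hw))
                (fun w hw => hsup' w (by
                  rw [SimpleGraph.Walk.support_cons]; exact List.mem_cons_of_mem _ hw))

lemma pathW_support_not_junk (u : ↥S.E) (hUE : u.val ∪ {S.x} ∈ S.E)
    (hnj : ¬ junk S.x u.val) :
    ∀ w ∈ (S.pathW u (S.ux u hUE)).support, ¬ junk S.x w.val := by
  obtain ⟨a, ha, hax⟩ := Set.not_subset.mp hnj
  intro w hw hsub
  exact hax (hsub (S.support_pathW_subset a u (S.ux u hUE) ha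
    (Set.mem_union_left _ ha) w hw))

lemma not_rep_cases (m : ↥S.E) (hnj : ¬ junk S.x m.val) (hnr : ¬ isRep S.E S.x m.val) :
    S.x ∉ m.val ∧ m.val ∪ {S.x} ∈ S.E := by
  by_contra hcon
  push_neg at hcon
  by_cases hx : S.x ∈ m.val
  · exact hnr ⟨hnj, Or.inl hx⟩
  · exact hnr ⟨hnj, Or.inr (hcon hx)⟩

lemma keyN : ∀ (n : ℕ) (m b : ↥S.E) (p : S.T.Walk m b),
    p.length ≤ n → p.IsPath → S.x ∈ b.val → (∀ w ∈ p.support, ¬ junk S.x w.val) →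
    p.support.find? S.repB = some (S.c m) ∧
      ∀ (r : ↥S.E) (hr : S.c m = r) (hrr : S.c r = r),
        (S.T.induce {w : ↥S.E | S.c w = r}).Reachable ⟨m, hr⟩ ⟨r, hrr⟩ := by
  intro n
  induction n with
  | zero =>
      intro m b p hlen hp hb hsup
      cases p with
      | nil =>
          have hnj : ¬ junk S.x m.val := hsup m (by simp [SimpleGraph.Walk.support_nil])
          have hrep : isRep S.E S.x m.val := ⟨hnj, Or.inl hb⟩
          have hcm : S.c m = m := S.c_rep m hrep
          constructor
          · rw [SimpleGraph.Walk.support_nil,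
              List.find?_cons_of_pos ((S.repB_eq_iff m).mpr hrep), hcm]
          · intro r hr hrr
            have hmr : m = r := hcm.symm.trans hr
            have hvert : (⟨m, hr⟩ : {w : ↥S.E // S.c w = r}) = ⟨r, hrr⟩ := Subtype.ext hmr
            rw [hvert]
      | cons h q => simp [SimpleGraph.Walk.length_cons] at hlen
  | succ n ih =>
      intro m b p hlen hp hb hsup
      cases p with
      | nil =>
          have hnj : ¬ junk S.x m.val := hsup m (by simp [SimpleGraph.Walk.support_nil])
          have hrep : isRep S.E S.x m.val := ⟨hnj, Or.inl hb⟩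
          have hcm : S.c m = m := S.c_rep m hrep
          constructor
          · rw [SimpleGraph.Walk.support_nil,
              List.find?_cons_of_pos ((S.repB_eq_iff m).mpr hrep), hcm]
          · intro r hr hrr
            have hmr : m = r := hcm.symm.trans hr
            have hvert : (⟨m, hr⟩ : {w : ↥S.E // S.c w = r}) = ⟨r, hrr⟩ := Subtype.ext hmr
            rw [hvert]
      | @cons _ y _ h q =>
          have hms : m ∈ (SimpleGraph.Walk.cons h q).support :=
            SimpleGraph.Walk.start_mem_support _
          have hnj : ¬ junk S.x m.val := hsup m hms
          by_cases hrep : isRep S.E S.x m.val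
          · have hcm : S.c m = m := S.c_rep m hrep
            constructor
            · rw [SimpleGraph.Walk.support_cons,
                List.find?_cons_of_pos ((S.repB_eq_iff m).mpr hrep), hcm]
            · intro r hr hrr
              have hmr : m = r := hcm.symm.trans hr
              have hvert : (⟨m, hr⟩ : {w : ↥S.E // S.c w = r}) = ⟨r, hrr⟩ := Subtype.ext hmr
              rw [hvert]
          · obtain ⟨hxm, hUE⟩ := S.not_rep_cases m hnj hrep
            have hsubq : ∀ w ∈ q.support, ¬ junk S.x w.val := fun w hw => hsup w (by
              rw [SimpleGraph.Walk.support_cons]; exact List.mem_cons_of_mem _ hw)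
            obtain ⟨hfind, hreach⟩ := ih y b q
              (by simpa [SimpleGraph.Walk.length_cons] using hlen) hp.of_cons hb hsubq
            have hM := S.keyM (S.pathW m (S.ux m hUE)).length m (S.ux m hUE) b
              (S.pathW m (S.ux m hUE)) (SimpleGraph.Walk.cons h q) le_rfl
              (S.pathW_isPath _ _) hp (by simp [ux]) hb hxm
              (S.pathW_support_not_junk m hUE hnj) hsup
            have hsome : (SimpleGraph.Walk.cons h q).support.find? S.repB =
                some (S.cNJ m) := by
              rw [← hM]; exact S.cNJ_eq_some m hnj hxm hUE
            have hq : (SimpleGraph.Walk.cons h q).support.find? S.repB =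
                q.support.find? S.repB := by
              rw [SimpleGraph.Walk.support_cons, List.find?_cons_of_neg]
              simp only [S.repB_eq_iff]
              exact hrep
            have hcmy : S.c m = S.c y := by
              have h1 : some (S.cNJ m) = some (S.c y) := by rw [← hsome, hq, hfind]
              rw [S.c_nonjunk m hnj]
              exact Option.some_injective _ h1
            constructor
            · rw [hq, hfind, hcmy]
            · intro r hr hrr
              have hyr : S.c y = r := hcmy.symm.trans hr
              have hadj : (S.T.induce {w : ↥S.E | S.c w = r}).Adj
                  ⟨m, hr⟩ ⟨y, hyr⟩ := h
              exact hadj.reachable.trans (hreach r hyr hrr)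

lemma c_reach_nonjunk (u : ↥S.E) (hnj : ¬ junk S.x u.val) :
    ∀ (r : ↥S.E) (hr : S.c u = r) (hrr : S.c r = r),
      (S.T.induce {w : ↥S.E | S.c w = r}).Reachable ⟨u, hr⟩ ⟨r, hrr⟩ := by
  by_cases hrep : isRep S.E S.x u.val
  · intro r hr hrr
    have hur : u = r := (S.c_rep u hrep).symm.trans hr
    have hvert : (⟨u, hr⟩ : {w : ↥S.E // S.c w = r}) = ⟨r, hrr⟩ := Subtype.ext hur
    rw [hvert]
  · obtain ⟨hxu, hUE⟩ := S.not_rep_cases u hnj hrep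
    exact (S.keyN (S.pathW u (S.ux u hUE)).length u _ (S.pathW u (S.ux u hUE)) le_rfl
      (S.pathW_isPath _ _) (by simp [ux]) (S.pathW_support_not_junk u hUE hnj)).2

lemma exists_cons_of_ne {a b : ↥S.E} (w : S.T.Walk a b) (hab : a ≠ b) :
    ∃ (y : ↥S.E) (h : S.T.Adj a y) (q : S.T.Walk y b), w = SimpleGraph.Walk.cons h q := by
  cases w with
  | nil => exact absurd rfl hab
  | cons h q => exact ⟨_, h, q, rfl⟩

lemma firstNJ_eq_some (j : ↥S.E) :
    (S.pathW j S.r0).support.find? S.njB = some (S.firstNJ j) :=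
  (Option.some_get _).symm

lemma c_junk (j : ↥S.E) (hj : junk S.x j.val) : S.c j = S.cNJ (S.firstNJ j) := by
  unfold c; exact if_pos hj

lemma keyJ : ∀ (n : ℕ) (j : ↥S.E), (S.pathW j S.r0).length ≤ n → junk S.x j.val →
    ∀ (r : ↥S.E) (hr : S.c j = r) (hrr : S.c r = r),
      (S.T.induce {w : ↥S.E | S.c w = r}).Reachable ⟨j, hr⟩ ⟨r, hrr⟩ := by
  intro n
  induction n with
  | zero =>
      intro j hlen hj r hr hrr
      exfalso
      have hjr : j ≠ S.r0 := fun hh => S.isRep_r0.1 (hh ▸ hj)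
      obtain ⟨y, h, q, hw⟩ := S.exists_cons_of_ne (S.pathW j S.r0) hjr
      rw [hw] at hlen
      simp [SimpleGraph.Walk.length_cons] at hlen
  | succ n ih =>
      intro j hlen hj r hr hrr
      have hjr : j ≠ S.r0 := fun hh => S.isRep_r0.1 (hh ▸ hj)
      obtain ⟨y, h, q, hw⟩ := S.exists_cons_of_ne (S.pathW j S.r0) hjr
      have hqpath : q.IsPath := by
        have := S.pathW_isPath j S.r0
        rw [hw] at this
        exact this.of_cons
      have hqy : S.pathW y S.r0 = q := S.pathW_eq y S.r0 q hqpath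
      have hfind : (S.pathW j S.r0).support.find? S.njB = q.support.find? S.njB := by
        rw [hw, SimpleGraph.Walk.support_cons, List.find?_cons_of_neg]
        simp only [S.njB_eq_iff, not_not]
        exact hj
      by_cases hjy : junk S.x y.val
      · -- y is junk as well; c j = c y, recurse
        have h1 : some (S.firstNJ j) = q.support.find? S.njB := by
          rw [← hfind]; exact (S.firstNJ_eq_some j).symm
        have h2 : some (S.firstNJ y) = q.support.find? S.njB := by
          rw [← hqy]; exact (S.firstNJ_eq_some y).symm
        have hfj : S.firstNJ j = S.firstNJ y :=
          Option.some_injective _ (h1.trans h2.symm)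
        have hcjy : S.c j = S.c y := by
          rw [S.c_junk j hj, S.c_junk y hjy, hfj]
        have hyr : S.c y = r := hcjy.symm.trans hr
        have hadj : (S.T.induce {w : ↥S.E | S.c w = r}).Adj ⟨j, hr⟩ ⟨y, hyr⟩ := h
        refine hadj.reachable.trans ?_
        refine ih y ?_ hjy r hyr hrr
        have hlq : (S.pathW j S.r0).length = q.length + 1 := by
          rw [hw, SimpleGraph.Walk.length_cons]
        rw [hqy]
        omega
      · -- y is not junk
        have h1 : some (S.firstNJ j) = q.support.find? S.njB := by
          rw [← hfind]; exact (S.firstNJ_eq_some j).symm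
        have h2 : q.support.find? S.njB = some y := by
          rw [q.support_eq_cons]
          exact List.find?_cons_of_pos ((S.njB_eq_iff y).mpr hjy)
        have hfj : S.firstNJ j = y := Option.some_injective _ (h1.trans h2)
        have hcjy : S.c j = S.c y := by
          rw [S.c_junk j hj, hfj, S.c_nonjunk y hjy]
        have hyr : S.c y = r := hcjy.symm.trans hr
        have hadj : (S.T.induce {w : ↥S.E | S.c w = r}).Adj ⟨j, hr⟩ ⟨y, hyr⟩ := h
        exact hadj.reachable.trans (S.c_reach_nonjunk y hjy r hyr hrr)

lemma c_reach (u : ↥S.E) :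
    ∀ (r : ↥S.E) (hr : S.c u = r) (hrr : S.c r = r),
      (S.T.induce {w : ↥S.E | S.c w = r}).Reachable ⟨u, hr⟩ ⟨r, hrr⟩ := by
  by_cases hj : junk S.x u.val
  · exact S.keyJ (S.pathW u S.r0).length u le_rfl hj
  · exact S.c_reach_nonjunk u hj

lemma fiber_reach (u v : ↥S.E) (huv : S.c u = S.c v) :
    (S.T.induce {w : ↥S.E | S.c w = S.c u}).Reachable ⟨u, rfl⟩ ⟨v, huv.symm⟩ := by
  have h1 := S.c_reach u (S.c u) rfl (S.c_idem u)
  have h2 := S.c_reach v (S.c u) huv.symm (S.c_idem u)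
  exact h1.trans h2.symm

lemma mem_c (u : ↥S.E) (v : V) (hv : v ∈ u.val) (hvx : v ≠ S.x) : v ∈ (S.c u).val := by
  by_cases hj : junk S.x u.val
  · exact absurd (hj hv) (by simpa using hvx)
  · rw [S.c_nonjunk u hj]
    by_cases h : S.x ∈ u.val ∨ u.val ∪ {S.x} ∉ S.E
    · rw [show S.cNJ u = u from by unfold cNJ; exact dif_pos (Or.inr h)]
      exact hv
    · push_neg at h
      obtain ⟨hxu, hUE⟩ := h
      have hmem : S.cNJ u ∈ (S.pathW u (S.ux u hUE)).support :=
        List.mem_of_find?_eq_some (S.cNJ_eq_some u hj hxu hUE)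
      exact S.support_pathW_subset v u (S.ux u hUE) hv (Set.mem_union_left _ hv) _ hmem

/-- the canonical representative in `E` of an element of the reduced hypergraph -/
def rho (A : ↥(removeVertex S.E S.x)) : ↥S.E :=
  if h : A.val ∪ {S.x} ∈ S.E then ⟨A.val ∪ {S.x}, h⟩ else ⟨A.val, mem_E_of_mem_E' A.2 h⟩

lemma isRep_rho (A : ↥(removeVertex S.E S.x)) : isRep S.E S.x (S.rho A).val := by
  have h1 := notmem_of_mem_E' A.2
  have h2 := ne_empty_of_mem_E' A.2
  obtain ⟨a, ha⟩ := Set.nonempty_iff_ne_empty.mpr h2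
  have hax : a ≠ S.x := fun h => h1 (h ▸ ha)
  unfold rho
  split
  · exact ⟨fun hs => hax (hs (by simp [ha])), Or.inl (by simp)⟩
  · next h => exact ⟨fun hs => hax (hs ha), Or.inr h⟩

lemma mem_rho (A : ↥(removeVertex S.E S.x)) : A.val ⊆ (S.rho A).val := by
  unfold rho
  split
  · exact Set.subset_union_left
  · exact subset_rfl

lemma rho_val_diff (A : ↥(removeVertex S.E S.x)) : (S.rho A).val \ {S.x} = A.val := by
  have h1 := notmem_of_mem_E' A.2
  unfold rho
  split
  · ext a
    constructor
    · rintro ⟨ha | ha, hax⟩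
      · exact ha
      · exact absurd ha hax
    · intro ha
      exact ⟨Or.inl ha, fun hax => h1 ((Set.mem_singleton_iff.mp hax) ▸ ha)⟩
  · ext a
    constructor
    · rintro ⟨ha, -⟩; exact ha
    · intro ha
      exact ⟨ha, fun hax => h1 ((Set.mem_singleton_iff.mp hax) ▸ ha)⟩

/-- projection of a hyperedge to its class in the reduced hypergraph -/
def qmap (u : ↥S.E) : ↥(removeVertex S.E S.x) :=
  ⟨(S.c u).val \ {S.x}, diff_mem_E' (S.c u).2 (S.isRep_c u).1⟩

lemma rho_qmap (u : ↥S.E) : S.rho (S.qmap u) = S.c u := by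
  apply Subtype.ext
  by_cases hx : S.x ∈ (S.c u).val
  · have hval : (S.qmap u).val ∪ {S.x} = (S.c u).val := by
      show ((S.c u).val \ {S.x}) ∪ {S.x} = (S.c u).val
      ext a
      constructor
      · rintro (⟨ha, -⟩ | ha)
        · exact ha
        · exact (Set.mem_singleton_iff.mp ha) ▸ hx
      · intro ha
        by_cases hax : a = S.x
        · exact Or.inr (by simp [hax])
        · exact Or.inl ⟨ha, by simpa using hax⟩
    unfold rho
    split
    · next h => rw [← hval]
    · next h => exact absurd (hval ▸ (S.c u).2) h
  · have hUE : (S.c u).val ∪ {S.x} ∉ S.E := by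
      rcases (S.isRep_c u).2 with h | h
      · exact absurd h hx
      · exact h
    have hval : (S.qmap u).val = (S.c u).val := by
      show (S.c u).val \ {S.x} = (S.c u).val
      ext a
      constructor
      · rintro ⟨ha, -⟩; exact ha
      · intro ha; exact ⟨ha, fun hax => hx ((Set.mem_singleton_iff.mp hax) ▸ ha)⟩
    have hUE' : (S.qmap u).val ∪ {S.x} ∉ S.E := by rw [hval]; exact hUE
    unfold rho
    split
    · next h => exact absurd h hUE'
    · next h => exact hval

lemma qmap_rho (A : ↥(removeVertex S.E S.x)) : S.qmap (S.rho A) = A := by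
  apply Subtype.ext
  show (S.c (S.rho A)).val \ {S.x} = A.val
  rw [S.c_rep _ (S.isRep_rho A)]
  exact S.rho_val_diff A

lemma rho_inj : Function.Injective S.rho := by
  intro A B h
  have := congrArg S.qmap h
  rwa [S.qmap_rho, S.qmap_rho] at this

/-- the quotient graph on the reduced hypergraph -/
def T' : SimpleGraph ↥(removeVertex S.E S.x) where
  Adj A B := A ≠ B ∧ ∃ a b : ↥S.E, S.c a = S.rho A ∧ S.c b = S.rho B ∧ S.T.Adj a b
  symm := by
    constructor; rintro A B ⟨hne, a, b, ha, hb, hab⟩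
    exact ⟨hne.symm, b, a, hb, ha, hab.symm⟩
  loopless := by constructor; rintro A ⟨hne, -⟩; exact hne rfl

lemma q_reach {a b : ↥S.E} (w : S.T.Walk a b) : S.T'.Reachable (S.qmap a) (S.qmap b) := by
  induction w with
  | nil => exact Reachable.refl _
  | @cons a y b h w ih =>
      by_cases he : S.qmap a = S.qmap y
      · rw [he]; exact ih
      · exact (SimpleGraph.Adj.reachable
          (⟨he, a, y, (S.rho_qmap a).symm, (S.rho_qmap y).symm, h⟩ : S.T'.Adj _ _)).trans ih

lemma T'_preconnected : S.T'.Preconnected := by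
  intro A B
  have := S.q_reach ((S.hpre (S.rho A) (S.rho B)).some)
  rwa [S.qmap_rho, S.qmap_rho] at this

lemma fiber_reach_del (e0 : Sym2 ↥S.E)
    (he : ∀ z w : ↥S.E, S.c z = S.c w → s(z, w) ≠ e0) (u v : ↥S.E) (h : S.c u = S.c v) :
    (S.T.deleteEdges {e0}).Reachable u v := by
  refine S.reach_of_induced (Q := {w : ↥S.E | S.c w = S.c u}) ?_
    (u := ⟨u, rfl⟩) (v := ⟨v, h.symm⟩) (S.fiber_reach u v h)
  intro z w hz hw hzw
  rw [SimpleGraph.deleteEdges_adj]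
  exact ⟨hzw, by simpa using he z w (hz.trans hw.symm)⟩

lemma liftDel {A B : ↥(removeVertex S.E S.x)} {a0 b0 : ↥S.E}
    (hA : S.c a0 = S.rho A) (hB : S.c b0 = S.rho B) (hAB : A ≠ B) :
    ∀ {X Y : ↥(removeVertex S.E S.x)} (w : S.T'.Walk X Y), s(A, B) ∉ w.edges →
      ∀ (a b : ↥S.E), S.c a = S.rho X → S.c b = S.rho Y →
      (S.T.deleteEdges {s(a0, b0)}).Reachable a b := by
  have he0 : ∀ z w : ↥S.E, S.c z = S.c w → s(z, w) ≠ s(a0, b0) := by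
    intro z w hzw hzz
    rw [Sym2.eq_iff] at hzz
    rcases hzz with ⟨rfl, rfl⟩ | ⟨rfl, rfl⟩
    · exact hAB (S.rho_inj ((hA.symm.trans hzw).trans hB))
    · exact hAB (S.rho_inj ((hA.symm.trans hzw.symm).trans hB))
  intro X Y w
  induction w with
  | nil =>
      intro _ a b ha hbb
      exact S.fiber_reach_del _ he0 a b (ha.trans hbb.symm)
  | @cons X Z Y h w ih =>
      intro hnotin a b ha hbb
      obtain ⟨hXZ, a1, b1, ha1, hb1, hadj⟩ := id h
      have hstep : (S.T.deleteEdges {s(a0, b0)}).Adj a1 b1 := by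
        rw [SimpleGraph.deleteEdges_adj]
        refine ⟨hadj, ?_⟩
        simp only [Set.mem_singleton_iff]
        intro hee
        rw [Sym2.eq_iff] at hee
        rcases hee with ⟨rfl, rfl⟩ | ⟨rfl, rfl⟩
        · have hX : X = A := S.rho_inj (ha1.symm.trans hA)
          have hZ : B = Z := S.rho_inj (hB.symm.trans hb1)
          apply hnotin
          rw [SimpleGraph.Walk.edges_cons, ← hX, hZ]
          exact List.mem_cons_self
        · have hX : X = B := S.rho_inj (ha1.symm.trans hB)
          have hZ : A = Z := S.rho_inj (hA.symm.trans hb1)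
          apply hnotin
          rw [SimpleGraph.Walk.edges_cons, hZ, ← hX, Sym2.eq_swap]
          exact List.mem_cons_self
      have r1 := S.fiber_reach_del _ he0 a a1 (ha.trans ha1.symm)
      have r3 := ih (fun hh => hnotin (by
        rw [SimpleGraph.Walk.edges_cons]; exact List.mem_cons_of_mem _ hh)) b1 b hb1 hbb
      exact (r1.trans hstep.reachable).trans r3

lemma T'_acyclic : S.T'.IsAcyclic := by
  intro A p hp
  cases p with
  | nil => exact SimpleGraph.Walk.IsCycle.not_of_nil hp
  | @cons _ B _ h w =>
      obtain ⟨hAB, a0, b0, hA, hB, hadj⟩ := id h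
      have hnodup := hp.edges_nodup
      rw [SimpleGraph.Walk.edges_cons] at hnodup
      have hnotin : s(A, B) ∉ w.edges := (List.nodup_cons.mp hnodup).1
      have hre := S.liftDel hA hB hAB w hnotin b0 a0 hB hA
      have hbr := (SimpleGraph.isAcyclic_iff_forall_edge_isBridge.mp S.hac)
        (S.T.mem_edgeSet.mpr hadj)
      rw [SimpleGraph.isBridge_iff] at hbr
      exact hbr hre.symm

lemma mem_qmap (u : ↥S.E) (v : V) (hv : v ∈ u.val) (hvx : v ≠ S.x) :
    v ∈ (S.qmap u).val :=
  ⟨S.mem_c u v hv hvx, by simpa using hvx⟩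

lemma q_reach_v (v : V) (hvx : v ≠ S.x) {a b : ↥{K : ↥S.E | v ∈ (K : Set V)}}
    (w : (S.T.induce {K : ↥S.E | v ∈ (K : Set V)}).Walk a b) :
    (S.T'.induce {K : ↥(removeVertex S.E S.x) | v ∈ (K : Set V)}).Reachable
      ⟨S.qmap a.val, S.mem_qmap a.val v a.2 hvx⟩
      ⟨S.qmap b.val, S.mem_qmap b.val v b.2 hvx⟩ := by
  induction w with
  | nil => exact Reachable.refl _
  | @cons a z b h w ih =>
      by_cases he : S.qmap a.val = S.qmap z.val
      · have hv : (⟨S.qmap a.val, S.mem_qmap a.val v a.2 hvx⟩ :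
            ↥{K : ↥(removeVertex S.E S.x) | v ∈ (K : Set V)}) =
            ⟨S.qmap z.val, S.mem_qmap z.val v z.2 hvx⟩ := Subtype.ext he
        rw [hv]; exact ih
      · refine (SimpleGraph.Adj.reachable ?_).trans ih
        exact (⟨he, a.val, z.val, (S.rho_qmap a.val).symm, (S.rho_qmap z.val).symm, h⟩ :
          S.T'.Adj (S.qmap a.val) (S.qmap z.val))

lemma T'_conn (v : V) :
    (S.T'.induce {K : ↥(removeVertex S.E S.x) | v ∈ (K : Set V)}).Preconnected := by
  by_cases hvx : v = S.x
  · intro A B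
    exfalso
    obtain ⟨⟨Aval, hAval⟩, hA2⟩ := A
    have hv2 : v ∈ Aval := hA2
    rw [hvx] at hv2
    exact notmem_of_mem_E' hAval hv2
  · intro A B
    have hA' : v ∈ (S.rho A.1).val := S.mem_rho A.1 A.2
    have hB' : v ∈ (S.rho B.1).val := S.mem_rho B.1 B.2
    obtain ⟨w⟩ := S.hcon v ⟨S.rho A.1, hA'⟩ ⟨S.rho B.1, hB'⟩
    have hre := S.q_reach_v v hvx w
    have e1 : (⟨S.qmap (S.rho A.1), S.mem_qmap (S.rho A.1) v hA' hvx⟩ :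
        ↥{K : ↥(removeVertex S.E S.x) | v ∈ (K : Set V)}) = A :=
      Subtype.ext (S.qmap_rho A.1)
    have e2 : (⟨S.qmap (S.rho B.1), S.mem_qmap (S.rho B.1) v hB' hvx⟩ :
        ↥{K : ↥(removeVertex S.E S.x) | v ∈ (K : Set V)}) = B :=
      Subtype.ext (S.qmap_rho B.1)
    rwa [e1, e2] at hre

end JT

end

end RV


/-- If a hypergraph is α-acyclic, then removing any vertex `x` from every
hyperedge yields an α-acyclic hypergraph. -/
theorem alphaAcyclic_removeVertex (E : Set (Set V)) (x : V)
    (h : AlphaAcyclic E) : AlphaAcyclic (removeVertex E x) := by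
  obtain ⟨T, hT1, hT2, hT3⟩ := h
  by_cases hne : (removeVertex E x).Nonempty
  · let S : RV.JT V := ⟨E, x, T, hT1, hT2, hT3, hne⟩
    exact ⟨S.T', S.T'_acyclic, S.T'_preconnected, S.T'_conn⟩
  · have hempty : IsEmpty ↥(removeVertex E x) :=
      ⟨fun a => hne ⟨a.1, a.2⟩⟩
    refine ⟨⊥, ?_, ?_, ?_⟩
    · intro u
      exact (hempty.false u).elim
    · intro u v
      exact (hempty.false u).elim
    · intro v u w
      exact (hempty.false u.1).elim
end

section
/- If a hypergraph H = (V, E) is α-acyclic and R, S are two distinct hyperedges in E with R ⊆ S, then the hypergraph H' = (V, E ∖ {R}) obtained by deleting the hyperedge R is also α-acyclic. -/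
variable {V : Type*}

open SimpleGraph

private lemma reach_transfer {α β : Type*} {G : SimpleGraph α} {H : SimpleGraph β} (f : α → β)
    (hf : ∀ x y, G.Adj x y → H.Reachable (f x) (f y)) {x y : α} (h : G.Reachable x y) :
    H.Reachable (f x) (f y) := by
  obtain ⟨w⟩ := h
  induction w with
  | nil => exact Reachable.refl _
  | cons h p ih => exact (hf _ _ h).trans ih

private lemma sym2_ne {γ : Type*} {x y a b : γ}
    (h : ¬((x = a ∧ y = b) ∨ (x = b ∧ y = a))) : s(x, y) ≠ s(a, b) :=
  fun hh => h (Sym2.eq_iff.mp hh)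

private lemma aux_delete (E : Set (Set V)) (R : Set V) (hR : R ∈ E)
    (T : SimpleGraph E) (hac : T.IsAcyclic) (hconn : T.Preconnected)
    (hind : ∀ v : V, (T.induce {K : ↥E | v ∈ (K : Set V)}).Preconnected)
    (N : ↥E) (hadj : T.Adj ⟨R, hR⟩ N)
    (hNall : ∀ v ∈ R, v ∈ (N : Set V)) : AlphaAcyclic (E \ {R}) := by
  set Rc : ↥E := ⟨R, hR⟩ with hRc
  have hNR : (N : Set V) ≠ R := fun hh => hadj.ne' (Subtype.ext hh)
  set ι : ↥(E \ {R}) → ↥E := fun a => ⟨a.1, a.2.1⟩ with hι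
  have ιinj : Function.Injective ι := fun a b hh => Subtype.ext (congrArg (Subtype.val : ↥E → Set V) hh)
  have ιne : ∀ a : ↥(E \ {R}), ι a ≠ Rc := fun a hh => a.2.2 (congrArg Subtype.val hh)
  set N' : ↥(E \ {R}) := ⟨N.1, N.2, hNR⟩ with hN'
  have ιN' : ι N' = N := Subtype.ext rfl
  set T' : SimpleGraph ↥(E \ {R}) :=
    { Adj := fun a b => a ≠ b ∧
        (T.Adj (ι a) (ι b) ∨ (ι a = N ∧ T.Adj Rc (ι b)) ∨ (ι b = N ∧ T.Adj Rc (ι a)))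
      symm := by
        constructor
        rintro a b ⟨h1, h2 | ⟨h3, h4⟩ | ⟨h3, h4⟩⟩
        · exact ⟨h1.symm, Or.inl h2.symm⟩
        · exact ⟨h1.symm, Or.inr (Or.inr ⟨h3, h4⟩)⟩
        · exact ⟨h1.symm, Or.inr (Or.inl ⟨h3, h4⟩)⟩
      loopless := ⟨fun a hh => hh.1 rfl⟩ } with hT'
  have hbr : ∀ {x y : ↥E}, T.Adj x y → ¬(T \ fromEdgeSet {s(x, y)}).Reachable x y := by
    intro x y hxy
    exact (isBridge_iff.mp (isAcyclic_iff_forall_adj_isBridge.mp hac hxy))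
  have del_adj : ∀ {e : Sym2 ↥E} {x y : ↥E}, T.Adj x y → s(x, y) ≠ e →
      (T \ fromEdgeSet {e}).Adj x y := by
    intro e x y h1 h2
    rw [sdiff_adj, fromEdgeSet_adj]
    exact ⟨h1, fun hc => h2 hc.1⟩
  have del_adj' : ∀ {e : Sym2 ↥(E \ {R})} {x y : ↥(E \ {R})},
      (T' \ fromEdgeSet {e}).Adj x y → T'.Adj x y ∧ s(x, y) ≠ e := by
    intro e x y hh
    rw [sdiff_adj, fromEdgeSet_adj] at hh
    exact ⟨hh.1, fun hc => hh.2 ⟨hc, hh.1.ne⟩⟩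
  -- key lemma for "new" edges
  have key : ∀ a b : ↥(E \ {R}), a ≠ b → ι a = N → T.Adj Rc (ι b) →
      ¬(T' \ fromEdgeSet {s(a, b)}).Reachable a b := by
    intro a b hab haN hTb hre
    have hbN : ι b ≠ N := fun hh => hab (ιinj (haN.trans hh.symm))
    have step : ∀ x y : ↥(E \ {R}), (T' \ fromEdgeSet {s(a, b)}).Adj x y →
        (T \ fromEdgeSet {s(Rc, ι b)}).Reachable (ι x) (ι y) := by
      intro x y hxy
      obtain ⟨⟨hxyne, hor⟩, hsne⟩ := del_adj' hxy
      rcases hor with h | ⟨h1, h2⟩ | ⟨h1, h2⟩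
      · refine (del_adj h (sym2_ne ?_)).reachable
        rintro (⟨hc, -⟩ | ⟨-, hc⟩)
        · exact ιne x hc
        · exact ιne y hc
      · have e1 : (T \ fromEdgeSet {s(Rc, ι b)}).Adj (ι x) Rc := by
          refine del_adj (h1 ▸ hadj.symm) (sym2_ne ?_)
          rintro (⟨hc, -⟩ | ⟨hc, -⟩)
          · exact ιne x hc
          · exact hbN (hc ▸ h1)
        have e2 : (T \ fromEdgeSet {s(Rc, ι b)}).Adj Rc (ι y) := by
          refine del_adj h2 (sym2_ne ?_)
          rintro (⟨-, hc⟩ | ⟨-, hc⟩)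
          · exact hsne (by rw [ιinj (h1.trans haN.symm), ιinj hc])
          · exact ιne y hc
        exact e1.reachable.trans e2.reachable
      · have e1 : (T \ fromEdgeSet {s(Rc, ι b)}).Adj (ι y) Rc := by
          refine del_adj (h1 ▸ hadj.symm) (sym2_ne ?_)
          rintro (⟨hc, -⟩ | ⟨hc, -⟩)
          · exact ιne y hc
          · exact hbN (hc ▸ h1)
        have e2 : (T \ fromEdgeSet {s(Rc, ι b)}).Adj Rc (ι x) := by
          refine del_adj h2 (sym2_ne ?_)
          rintro (⟨-, hc⟩ | ⟨-, hc⟩)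
          · exact hsne (by rw [ιinj (h1.trans haN.symm), ιinj hc]; exact Sym2.eq_swap)
          · exact ιne x hc
        exact (e1.reachable.trans e2.reachable).symm
    have hreach2 : (T \ fromEdgeSet {s(Rc, ι b)}).Reachable (ι a) (ι b) :=
      reach_transfer ι step hre
    have hrN : (T \ fromEdgeSet {s(Rc, ι b)}).Reachable N (ι b) := haN ▸ hreach2
    have eRN : (T \ fromEdgeSet {s(Rc, ι b)}).Adj Rc N := by
      refine del_adj hadj (sym2_ne ?_)
      rintro (⟨-, hc⟩ | ⟨hc, -⟩)
      · exact hbN hc.symm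
      · exact ιne b hc.symm
    exact hbr hTb (eRN.reachable.trans hrN)
  refine ⟨T', ?_, ?_, ?_⟩
  · -- acyclic
    rw [isAcyclic_iff_forall_adj_isBridge]
    intro a b hab
    rw [isBridge_iff]
    obtain ⟨hne_ab, hor⟩ := hab
    rcases hor with hT | ⟨haN, hTb⟩ | ⟨hbN, hTa⟩
    · intro hre
      have step : ∀ x y : ↥(E \ {R}), (T' \ fromEdgeSet {s(a, b)}).Adj x y →
          (T \ fromEdgeSet {s(ι a, ι b)}).Reachable (ι x) (ι y) := by
        intro x y hxy
        obtain ⟨⟨hxyne, hor⟩, hsne⟩ := del_adj' hxy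
        have hRab : Rc ≠ ι a := fun hc => ιne a hc.symm
        have hRbb : Rc ≠ ι b := fun hc => ιne b hc.symm
        rcases hor with h | ⟨h1, h2⟩ | ⟨h1, h2⟩
        · refine (del_adj h (sym2_ne ?_)).reachable
          rintro (⟨hc1, hc2⟩ | ⟨hc1, hc2⟩)
          · exact hsne (by rw [ιinj hc1, ιinj hc2])
          · exact hsne (by rw [ιinj hc1, ιinj hc2]; exact Sym2.eq_swap)
        · have e1 : (T \ fromEdgeSet {s(ι a, ι b)}).Adj (ι x) Rc := by
            refine del_adj (h1 ▸ hadj.symm) (sym2_ne ?_)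
            rintro (⟨-, hc⟩ | ⟨-, hc⟩)
            · exact ιne b hc.symm
            · exact ιne a hc.symm
          have e2 : (T \ fromEdgeSet {s(ι a, ι b)}).Adj Rc (ι y) := by
            refine del_adj h2 (sym2_ne ?_)
            rintro (⟨hc, -⟩ | ⟨hc, -⟩)
            · exact ιne a hc.symm
            · exact ιne b hc.symm
          exact e1.reachable.trans e2.reachable
        · have e1 : (T \ fromEdgeSet {s(ι a, ι b)}).Adj (ι y) Rc := by
            refine del_adj (h1 ▸ hadj.symm) (sym2_ne ?_)
            rintro (⟨-, hc⟩ | ⟨-, hc⟩)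
            · exact ιne b hc.symm
            · exact ιne a hc.symm
          have e2 : (T \ fromEdgeSet {s(ι a, ι b)}).Adj Rc (ι x) := by
            refine del_adj h2 (sym2_ne ?_)
            rintro (⟨hc, -⟩ | ⟨hc, -⟩)
            · exact ιne a hc.symm
            · exact ιne b hc.symm
          exact (e1.reachable.trans e2.reachable).symm
      exact hbr hT (reach_transfer ι step hre)
    · exact key a b hne_ab haN hTb
    · intro hre
      refine key b a hne_ab.symm hbN hTa ?_
      have hsw : s(b, a) = s(a, b) := Sym2.eq_swap
      rw [hsw]
      exact hre.symm
  · -- preconnected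
    classical
    intro a b
    set f : ↥E → ↥(E \ {R}) := fun x =>
      if hx : (x : Set V) = R then N' else ⟨x.1, x.2, hx⟩ with hf
    have hfι : ∀ c : ↥(E \ {R}), f (ι c) = c := by
      intro c
      have hc : ((ι c : ↥E) : Set V) ≠ R := fun hh => c.2.2 hh
      simp only [hf, dif_neg hc]; rfl
    have step : ∀ x y : ↥E, T.Adj x y → T'.Reachable (f x) (f y) := by
      intro x y hxy
      by_cases hx : (x : Set V) = R
      · have hxRc : x = Rc := Subtype.ext hx
        have hfx : f x = N' := by simp only [hf, dif_pos hx]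
        have hy : (y : Set V) ≠ R := fun hh => hxy.ne' (Subtype.ext (hh.trans hx.symm))
        have hfy : f y = ⟨y.1, y.2, hy⟩ := by simp only [hf, dif_neg hy]
        by_cases hyN : (y : Set V) = ↑N
        · have h2 : f y = N' := by rw [hfy]; exact Subtype.ext hyN
          rw [hfx, h2]
        · have hadjy : T'.Adj N' ⟨y.1, y.2, hy⟩ := by
            refine ⟨fun hh => hyN (congrArg (Subtype.val : ↥(E \ {R}) → Set V) hh).symm,
              Or.inr (Or.inl ⟨ιN', ?_⟩)⟩
            exact hxRc ▸ hxy
          rw [hfx, hfy]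
          exact hadjy.reachable
      · by_cases hy : (y : Set V) = R
        · have hyRc : y = Rc := Subtype.ext hy
          have hfy : f y = N' := by simp only [hf, dif_pos hy]
          have hfx : f x = ⟨x.1, x.2, hx⟩ := by simp only [hf, dif_neg hx]
          by_cases hxN : (x : Set V) = ↑N
          · have h2 : f x = N' := by rw [hfx]; exact Subtype.ext hxN
            rw [hfy, h2]
          · have hadjx : T'.Adj ⟨x.1, x.2, hx⟩ N' := by
              refine ⟨fun hh => hxN (congrArg (Subtype.val : ↥(E \ {R}) → Set V) hh),
                Or.inr (Or.inr ⟨ιN', ?_⟩)⟩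
              exact hyRc ▸ hxy.symm
            rw [hfx, hfy]
            exact hadjx.reachable
        · have hfx : f x = ⟨x.1, x.2, hx⟩ := by simp only [hf, dif_neg hx]
          have hfy : f y = ⟨y.1, y.2, hy⟩ := by simp only [hf, dif_neg hy]
          have hadjxy : T'.Adj ⟨x.1, x.2, hx⟩ ⟨y.1, y.2, hy⟩ := by
            refine ⟨fun hh => hxy.ne (Subtype.ext (congrArg (Subtype.val : ↥(E \ {R}) → Set V) hh)), Or.inl ?_⟩
            exact hxy
          rw [hfx, hfy]
          exact hadjxy.reachable
    have := reach_transfer f step (hconn (ι a) (ι b))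
    rwa [hfι a, hfι b] at this
  · -- induced preconnected
    classical
    intro v
    have hindv := hind v
    set s1 : Set ↥E := {K : ↥E | v ∈ (K : Set V)} with hs1
    set s2 : Set ↥(E \ {R}) := {K : ↥(E \ {R}) | v ∈ (K : Set V)} with hs2
    intro a b
    set g : ↥s1 → ↥s2 := fun x =>
      if hx : ((x : ↥E) : Set V) = R then
        ⟨N', hNall v (hx ▸ x.2)⟩
      else ⟨⟨(x : ↥E).1, (x : ↥E).2, hx⟩, x.2⟩ with hg
    have hga : ∀ c : ↥s2, g ⟨ι (c : ↥(E \ {R})), c.2⟩ = c := by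
      intro c
      have hc : ((ι (c : ↥(E \ {R})) : ↥E) : Set V) ≠ R := fun hh => (c : ↥(E \ {R})).2.2 hh
      simp only [hg, dif_neg hc]; rfl
    have step : ∀ x y : ↥s1, (T.induce s1).Adj x y →
        (T'.induce s2).Reachable (g x) (g y) := by
      intro x y hxy
      have hxy' : T.Adj (x : ↥E) (y : ↥E) := hxy
      by_cases hx : ((x : ↥E) : Set V) = R
      · have hgx : g x = ⟨N', hNall v (hx ▸ x.2)⟩ := by simp only [hg, dif_pos hx]
        have hy : ((y : ↥E) : Set V) ≠ R := fun hh =>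
          hxy'.ne (Subtype.ext (hx.trans hh.symm))
        have hgy : g y = ⟨⟨(y : ↥E).1, (y : ↥E).2, hy⟩, y.2⟩ := by
          simp only [hg, dif_neg hy]
        by_cases hyN : ((y : ↥E) : Set V) = ↑N
        · have h2 : g y = ⟨N', hNall v (hx ▸ x.2)⟩ := by
            rw [hgy]; exact Subtype.ext (Subtype.ext hyN)
          rw [hgx, h2]
        · have hadjy : (T'.induce s2).Adj ⟨N', hNall v (hx ▸ x.2)⟩
              ⟨⟨(y : ↥E).1, (y : ↥E).2, hy⟩, y.2⟩ := by
            refine ⟨fun hh => hyN (congrArg (Subtype.val : ↥(E \ {R}) → Set V) hh).symm,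
              Or.inr (Or.inl ⟨ιN', ?_⟩)⟩
            have hxRc : (x : ↥E) = Rc := Subtype.ext hx
            exact hxRc ▸ hxy'
          rw [hgx, hgy]
          exact hadjy.reachable
      · by_cases hy : ((y : ↥E) : Set V) = R
        · have hgy : g y = ⟨N', hNall v (hy ▸ y.2)⟩ := by simp only [hg, dif_pos hy]
          have hgx : g x = ⟨⟨(x : ↥E).1, (x : ↥E).2, hx⟩, x.2⟩ := by
            simp only [hg, dif_neg hx]
          by_cases hxN : ((x : ↥E) : Set V) = ↑N
          · have h2 : g x = ⟨N', hNall v (hy ▸ y.2)⟩ := by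
              rw [hgx]; exact Subtype.ext (Subtype.ext hxN)
            rw [hgy, h2]
          · have hadjx : (T'.induce s2).Adj ⟨⟨(x : ↥E).1, (x : ↥E).2, hx⟩, x.2⟩
                ⟨N', hNall v (hy ▸ y.2)⟩ := by
              refine ⟨fun hh => hxN (congrArg (Subtype.val : ↥(E \ {R}) → Set V) hh),
                Or.inr (Or.inr ⟨ιN', ?_⟩)⟩
              have hyRc : (y : ↥E) = Rc := Subtype.ext hy
              exact hyRc ▸ hxy'.symm
            rw [hgx, hgy]
            exact hadjx.reachable
        · have hgx : g x = ⟨⟨(x : ↥E).1, (x : ↥E).2, hx⟩, x.2⟩ := by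
            simp only [hg, dif_neg hx]
          have hgy : g y = ⟨⟨(y : ↥E).1, (y : ↥E).2, hy⟩, y.2⟩ := by
            simp only [hg, dif_neg hy]
          have hadjxy : (T'.induce s2).Adj ⟨⟨(x : ↥E).1, (x : ↥E).2, hx⟩, x.2⟩
              ⟨⟨(y : ↥E).1, (y : ↥E).2, hy⟩, y.2⟩ := by
            refine ⟨fun hh => hxy'.ne (Subtype.ext
              (congrArg (Subtype.val : ↥(E \ {R}) → Set V) hh)), Or.inl ?_⟩
            exact hxy'
          rw [hgx, hgy]
          exact hadjxy.reachable
    have := reach_transfer g step (hindv ⟨ι (a : ↥(E \ {R})), a.2⟩ ⟨ι (b : ↥(E \ {R})), b.2⟩)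
    rwa [hga a, hga b] at this

/-- If a hypergraph is α-acyclic and `R ⊆ S` are two distinct hyperedges,
then deleting the hyperedge `R` yields an α-acyclic hypergraph. -/
theorem alphaAcyclic_deleteSubedge (E : Set (Set V)) (R S : Set V)
    (hR : R ∈ E) (hS : S ∈ E) (hne : R ≠ S) (hsub : R ⊆ S)
    (h : AlphaAcyclic E) : AlphaAcyclic (E \ {R}) := by
  classical
  obtain ⟨T, hac, hconn, hind⟩ := h
  have hRS : (⟨R, hR⟩ : ↥E) ≠ ⟨S, hS⟩ := fun hh => hne (congrArg Subtype.val hh)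
  obtain ⟨w⟩ := hconn ⟨R, hR⟩ ⟨S, hS⟩
  set p : T.Walk ⟨R, hR⟩ ⟨S, hS⟩ := w.toPath.val with hp
  have hnil : ¬ p.Nil := fun hh =>
    hRS (SimpleGraph.Walk.eq_of_length_eq_zero (SimpleGraph.Walk.nil_iff_length_eq.mp hh))
  have hadj : T.Adj ⟨R, hR⟩ (p.getVert 1) := SimpleGraph.Walk.adj_snd hnil
  have hmem : p.getVert 1 ∈ p.support := by
    rw [← SimpleGraph.Walk.cons_support_tail hnil]
    exact List.mem_cons_of_mem _ (SimpleGraph.Walk.start_mem_support _)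
  have hNall : ∀ v ∈ R, v ∈ ((p.getVert 1 : ↥E) : Set V) := by
    intro v hv
    obtain ⟨w2⟩ := hind v ⟨⟨R, hR⟩, hv⟩ ⟨⟨S, hS⟩, hsub hv⟩
    set w3 := w2.map (SimpleGraph.Embedding.induce {K : ↥E | v ∈ (K : Set V)}).toHom with hw3
    have h3 : ∀ x ∈ w3.support, v ∈ (x : Set V) := by
      intro x hx
      rw [hw3, SimpleGraph.Walk.support_map] at hx
      obtain ⟨y, hy, rfl⟩ := List.mem_map.mp hx
      exact y.2
    have hq : w3.toPath = w.toPath := SimpleGraph.isAcyclic_iff_path_unique.mp hac _ _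
    have hmem' : p.getVert 1 ∈ w3.toPath.val.support := by
      rw [hq]; exact hmem
    exact h3 _ (SimpleGraph.Walk.support_toPath_subset _ hmem')
  exact aux_delete E R hR T hac hconn hind (p.getVert 1) hadj hNall
end

section
/- If a signed hypergraph H = (V, E⁺, E⁻) is signed-acyclic, then for every vertex x ∈ V, the signed hypergraph obtained by removing x from every hyperedge (in both E⁺ and E⁻) is also signed-acyclic. -/
variable {V : Type*}

namespace SignedAcyclicAux

open SimpleGraph

section PGraph

variable {α : Type*} {p : α → α} {r : α → ℕ}

/-- The graph generated by a parent function. -/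
def pgraph (p : α → α) : SimpleGraph α where
  Adj a b := a ≠ b ∧ (p a = b ∨ p b = a)
  symm := ⟨fun a b ⟨h1, h2⟩ => ⟨h1.symm, h2.symm⟩⟩
  loopless := ⟨fun a h => h.1 rfl⟩

lemma pgraph_adj {a b : α} : (pgraph p).Adj a b ↔ a ≠ b ∧ (p a = b ∨ p b = a) := Iff.rfl

lemma pgraph_isAcyclic (hp : ∀ a, p a ≠ a → r (p a) < r a) : (pgraph p).IsAcyclic := by
  intro v c hc
  have hne : c.support ≠ [] := c.support_ne_nil
  obtain ⟨M, hM⟩ : ∃ M, M ∈ c.support.argmax r := by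
    cases h : c.support.argmax r with
    | none => exact absurd (List.argmax_eq_none.mp h) hne
    | some m => exact ⟨m, rfl⟩
  have hMsup : M ∈ c.support := List.argmax_mem hM
  have hmax : ∀ w ∈ c.support, r w ≤ r M := fun w hw => List.le_of_mem_argmax hw hM
  classical
  have hc' : (c.rotate M hMsup).IsCycle := hc.rotate hMsup
  have hsub : ∀ w ∈ (c.rotate M hMsup).support, w ∈ c.support := by
    intro w hw
    rw [(c.rotate M hMsup).support_eq_cons] at hw
    rcases List.mem_cons.mp hw with h | h
    · exact h ▸ hMsup
    · have hrot := SimpleGraph.Walk.support_rotate c M hMsup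
      exact List.mem_of_mem_tail (hrot.mem_iff.mp h)
  revert hc' hsub
  generalize c.rotate M hMsup = c'
  intro hc' hsub
  cases c' with
  | nil => exact hc'.ne_nil rfl
  | @cons _ B _ hadj q =>
    have hlen : 3 ≤ (SimpleGraph.Walk.cons hadj q).length := hc'.three_le_length
    rw [SimpleGraph.Walk.length_cons] at hlen
    have hqnodup : q.support.Nodup := by
      have h2 := hc'.2
      rwa [SimpleGraph.Walk.support_cons, List.tail_cons] at h2
    have hqpath : q.IsPath := (SimpleGraph.Walk.isPath_def q).mpr hqnodup
    have hBM : B ≠ M := by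
      intro e
      subst e
      rw [SimpleGraph.Walk.isPath_iff_eq_nil] at hqpath
      subst hqpath
      simp at hlen
    obtain ⟨C, hadj2, q2, hq2eq⟩ := SimpleGraph.Walk.exists_eq_cons_of_ne (Ne.symm hBM) q.reverse
    have hBsup : B ∈ c.support := by
      apply hsub
      rw [SimpleGraph.Walk.support_cons]
      exact List.mem_cons_of_mem _ q.start_mem_support
    have hCsup : C ∈ c.support := by
      apply hsub
      have hC : C ∈ q.reverse.support := by
        rw [hq2eq, SimpleGraph.Walk.support_cons]
        exact List.mem_cons_of_mem _ q2.start_mem_support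
      rw [SimpleGraph.Walk.support_reverse, List.mem_reverse] at hC
      rw [SimpleGraph.Walk.support_cons]
      exact List.mem_cons_of_mem _ hC
    have hpMB : p M = B := by
      rcases hadj.2 with h | h
      · exact h
      · exfalso
        have hlt := hp B (by rw [h]; exact hadj.1)
        rw [h] at hlt
        exact absurd (hmax B hBsup) (by omega)
    have hpMC : p M = C := by
      rcases hadj2.2 with h | h
      · exact h
      · exfalso
        have hlt := hp C (by rw [h]; exact hadj2.1)
        rw [h] at hlt
        exact absurd (hmax C hCsup) (by omega)
    have hBC : B = C := hpMB ▸ hpMC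
    subst hBC
    have hq2path : q2.IsPath := by
      have hrp : q.reverse.IsPath := hqpath.reverse
      rw [hq2eq] at hrp
      exact hrp.of_cons
    rw [SimpleGraph.Walk.isPath_iff_eq_nil] at hq2path
    subst hq2path
    have hl1 : q.reverse.length = 1 := by rw [hq2eq]; simp
    rw [SimpleGraph.Walk.length_reverse] at hl1
    omega

lemma pgraph_reachable_root (hp : ∀ a, p a ≠ a → r (p a) < r a) (R : α)
    (hR : ∀ a, p a = a → a = R) (a : α) : (pgraph p).Reachable a R := by
  have key : ∀ n (a : α), r a ≤ n → (pgraph p).Reachable a R := by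
    intro n
    induction n with
    | zero =>
      intro a ha
      by_cases h : p a = a
      · rw [hR a h]
      · exact absurd (hp a h) (by omega)
    | succ n ih =>
      intro a ha
      by_cases h : p a = a
      · rw [hR a h]
      · have hadj : (pgraph p).Adj a (p a) := ⟨fun e => h e.symm, Or.inl rfl⟩
        exact hadj.reachable.trans (ih (p a) (by have := hp a h; omega))
  exact key (r a) a le_rfl

lemma pgraph_induce_preconnected (S : Set α)
    (hS : ∀ a b, a ∈ S → b ∈ S → a ≠ b → r b ≤ r a → p a ∈ S ∧ r (p a) < r a) :
    ((pgraph p).induce S).Preconnected := by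
  have key : ∀ n (a b : α) (ha : a ∈ S) (hb : b ∈ S), r a + r b ≤ n → r b ≤ r a →
      ((pgraph p).induce S).Reachable ⟨a, ha⟩ ⟨b, hb⟩ := by
    intro n
    induction n with
    | zero =>
      intro a b ha hb hsum hle
      by_cases hab : a = b
      · subst hab; rfl
      · exact absurd (hS a b ha hb hab hle).2 (by omega)
    | succ n ih =>
      intro a b ha hb hsum hle
      by_cases hab : a = b
      · subst hab; rfl
      · obtain ⟨hpS, hlt⟩ := hS a b ha hb hab hle
        have hadj : ((pgraph p).induce S).Adj ⟨a, ha⟩ ⟨p a, hpS⟩ := by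
          simp only [SimpleGraph.comap_adj, Function.Embedding.coe_subtype]
          exact ⟨fun e => by rw [← e] at hlt; omega, Or.inl rfl⟩
        refine hadj.reachable.trans ?_
        rcases le_total (r b) (r (p a)) with h | h
        · exact ih (p a) b hpS hb (by omega) h
        · exact (ih b (p a) hb hpS (by omega) h).symm
  intro A B
  obtain ⟨a, ha⟩ := A
  obtain ⟨b, hb⟩ := B
  rcases le_total (r b) (r a) with h | h
  · exact key (r a + r b) a b ha hb le_rfl h
  · exact (key (r a + r b) b a hb ha (by omega) h).symm

end PGraph


section Tree

variable {β : Type*} {T : SimpleGraph β}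

/-- The chosen path from `a` to the root `R₀`. -/
noncomputable def pathTo (hpre : T.Preconnected) (R₀ : β) (a : β) : T.Path a R₀ :=
  letI := Classical.decEq β
  (hpre a R₀).some.toPath

/-- Rank: distance to the root along the chosen path. -/
noncomputable def rk (hpre : T.Preconnected) (R₀ : β) (a : β) : ℕ :=
  (pathTo hpre R₀ a).1.length

/-- Parent: next vertex on the chosen path to the root. -/
noncomputable def pr (hpre : T.Preconnected) (R₀ : β) (a : β) : β :=
  (pathTo hpre R₀ a).1.getVert 1

variable (hpre : T.Preconnected) (R₀ : β) (hT : T.IsAcyclic)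

include hT

lemma pathTo_unique {a : β} (q : T.Walk a R₀) (hq : q.IsPath) : q = (pathTo hpre R₀ a).1 :=
  congrArg Subtype.val (SimpleGraph.isAcyclic_iff_path_unique.mp hT ⟨q, hq⟩ (pathTo hpre R₀ a))

lemma pathTo_root : (pathTo hpre R₀ R₀).1 = SimpleGraph.Walk.nil :=
  (pathTo_unique hpre R₀ hT SimpleGraph.Walk.nil (SimpleGraph.Walk.IsPath.nil)).symm

lemma pr_root : pr hpre R₀ R₀ = R₀ := by
  unfold pr
  rw [pathTo_root hpre R₀ hT]
  rfl

omit hT in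
lemma eq_root_of_rk_eq_zero {a : β} (h : rk hpre R₀ a = 0) : a = R₀ :=
  SimpleGraph.Walk.eq_of_length_eq_zero h

lemma parent_spec {a : β} (ha : a ≠ R₀) :
    ∃ h : T.Adj a (pr hpre R₀ a),
      (pathTo hpre R₀ a).1 = SimpleGraph.Walk.cons h (pathTo hpre R₀ (pr hpre R₀ a)).1 := by
  obtain ⟨b, hadj, q, hq⟩ := SimpleGraph.Walk.exists_eq_cons_of_ne ha (pathTo hpre R₀ a).1
  have hqp : q.IsPath := by
    have h2 := (pathTo hpre R₀ a).2
    rw [hq] at h2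
    exact h2.of_cons
  have hb : pr hpre R₀ a = b := by
    show (pathTo hpre R₀ a).1.getVert 1 = b
    rw [hq, SimpleGraph.Walk.getVert_cons_succ, SimpleGraph.Walk.getVert_zero]
  subst hb
  exact ⟨hadj, by rw [hq, pathTo_unique hpre R₀ hT q hqp]⟩

lemma adj_pr {a : β} (ha : a ≠ R₀) : T.Adj a (pr hpre R₀ a) := by
  obtain ⟨h, _⟩ := parent_spec hpre R₀ hT ha
  exact h

lemma rk_pr {a : β} (ha : a ≠ R₀) : rk hpre R₀ (pr hpre R₀ a) + 1 = rk hpre R₀ a := by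
  obtain ⟨h, hs⟩ := parent_spec hpre R₀ hT ha
  unfold rk
  rw [hs, SimpleGraph.Walk.length_cons]

lemma support_pr {a : β} (ha : a ≠ R₀) :
    (pathTo hpre R₀ a).1.support = a :: (pathTo hpre R₀ (pr hpre R₀ a)).1.support := by
  obtain ⟨h, hs⟩ := parent_spec hpre R₀ hT ha
  rw [hs, SimpleGraph.Walk.support_cons]

lemma rk_lt_of_mem_support_aux :
    ∀ (n : ℕ) (a b : β), rk hpre R₀ a ≤ n → b ∈ (pathTo hpre R₀ a).1.support → b ≠ a →
      rk hpre R₀ b < rk hpre R₀ a := by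
  intro n
  induction n with
  | zero =>
    intro a b hle hmem hne
    have ha : a = R₀ := eq_root_of_rk_eq_zero hpre R₀ (Nat.le_zero.mp hle)
    rw [ha, pathTo_root hpre R₀ hT] at hmem
    simp only [SimpleGraph.Walk.support_nil, List.mem_singleton] at hmem
    exact absurd (hmem.trans ha.symm) hne
  | succ n ih =>
    intro a b hle hmem hne
    by_cases ha : a = R₀
    · rw [ha, pathTo_root hpre R₀ hT] at hmem
      simp only [SimpleGraph.Walk.support_nil, List.mem_singleton] at hmem
      exact absurd (hmem.trans ha.symm) hne
    · rw [support_pr hpre R₀ hT ha] at hmem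
      rcases List.mem_cons.mp hmem with h | h
      · exact absurd h hne
      · have hrk := rk_pr hpre R₀ hT ha
        by_cases hb : b = pr hpre R₀ a
        · rw [hb]; omega
        · have := ih (pr hpre R₀ a) b (by omega) h hb
          omega

lemma rk_lt_of_mem_support {a b : β} (hmem : b ∈ (pathTo hpre R₀ a).1.support) (hne : b ≠ a) :
    rk hpre R₀ b < rk hpre R₀ a :=
  rk_lt_of_mem_support_aux hpre R₀ hT (rk hpre R₀ a) a b le_rfl hmem hne

lemma adj_pr_or {u w : β} (hadj : T.Adj u w) : pr hpre R₀ u = w ∨ pr hpre R₀ w = u := by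
  classical
  by_cases hw : w ∈ (pathTo hpre R₀ u).1.support
  · left
    have htake : ((pathTo hpre R₀ u).1.takeUntil w hw).IsPath := (pathTo hpre R₀ u).2.takeUntil hw
    have hsingle : (SimpleGraph.Walk.cons hadj SimpleGraph.Walk.nil).IsPath := by
      simp [SimpleGraph.Walk.cons_isPath_iff, hadj.ne]
    have hequ : (pathTo hpre R₀ u).1.takeUntil w hw = SimpleGraph.Walk.cons hadj SimpleGraph.Walk.nil :=
      congrArg Subtype.val (SimpleGraph.isAcyclic_iff_path_unique.mp hT ⟨_, htake⟩ ⟨_, hsingle⟩)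
    have hspec := (pathTo hpre R₀ u).1.take_spec hw
    rw [hequ, SimpleGraph.Walk.cons_append, SimpleGraph.Walk.nil_append] at hspec
    show (pathTo hpre R₀ u).1.getVert 1 = w
    rw [← hspec, SimpleGraph.Walk.getVert_cons_succ, SimpleGraph.Walk.getVert_zero]
  · right
    have hcons : (SimpleGraph.Walk.cons hadj.symm (pathTo hpre R₀ u).1).IsPath :=
      (pathTo hpre R₀ u).2.cons hw
    have heq := pathTo_unique hpre R₀ hT _ hcons
    show (pathTo hpre R₀ w).1.getVert 1 = u
    rw [← heq, SimpleGraph.Walk.getVert_cons_succ, SimpleGraph.Walk.getVert_zero]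

lemma descend_aux {a b : β} :
    ∀ {u : β} (q : T.Walk u b), a ∉ q.support → a ∈ (pathTo hpre R₀ u).1.support →
      rk hpre R₀ a < rk hpre R₀ u → rk hpre R₀ a < rk hpre R₀ b := by
  intro u q
  induction q with
  | nil => intro _ _ h; exact h
  | cons hadj q' ih =>
    rename_i u w eend
    intro hnot hmem hlt
    have hnot' : a ∉ q'.support := fun h =>
      hnot (by rw [SimpleGraph.Walk.support_cons]; exact List.mem_cons_of_mem _ h)
    have hau : a ≠ u := fun e => hnot (by rw [e]; exact SimpleGraph.Walk.start_mem_support _)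
    have haw : a ≠ w := fun e => hnot' (by rw [e]; exact SimpleGraph.Walk.start_mem_support q')
    rcases adj_pr_or hpre R₀ hT hadj with h1 | h2
    · have hu : u ≠ R₀ := by
        intro e; rw [e, pr_root hpre R₀ hT] at h1; exact hadj.ne (e.trans h1)
      have hmem' : a ∈ (pathTo hpre R₀ w).1.support := by
        rw [support_pr hpre R₀ hT hu, h1] at hmem
        rcases List.mem_cons.mp hmem with h | h
        · exact absurd h hau
        · exact h
      exact ih hnot' hmem' (rk_lt_of_mem_support hpre R₀ hT hmem' haw)
    · have hw : w ≠ R₀ := by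
        intro e; rw [e, pr_root hpre R₀ hT] at h2; exact hadj.ne (h2.symm.trans e.symm)
      have hmem' : a ∈ (pathTo hpre R₀ w).1.support := by
        rw [support_pr hpre R₀ hT hw, h2]
        exact List.mem_cons_of_mem _ hmem
      have hlt' : rk hpre R₀ a < rk hpre R₀ w := by
        have := rk_pr hpre R₀ hT hw; rw [h2] at this; omega
      exact ih hnot' hmem' hlt'

lemma tree_step (S : Set β) (hconn : (T.induce S).Preconnected) {a b : β}
    (ha : a ∈ S) (hb : b ∈ S) (hne : a ≠ b) (hle : rk hpre R₀ b ≤ rk hpre R₀ a) :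
    pr hpre R₀ a ∈ S ∧ a ≠ R₀ := by
  classical
  obtain ⟨w0⟩ := hconn ⟨a, ha⟩ ⟨b, hb⟩
  have hw1sup : ∀ y ∈ (w0.map (SimpleGraph.Embedding.induce S).toHom).support, y ∈ S := by
    intro y hy
    rw [SimpleGraph.Walk.support_map] at hy
    obtain ⟨z, hz, rfl⟩ := List.mem_map.mp hy
    exact z.2
  set P := (w0.map (SimpleGraph.Embedding.induce S).toHom).bypass with hPdef
  have hPpath : P.IsPath := SimpleGraph.Walk.bypass_isPath _
  have hPsup : ∀ y ∈ P.support, y ∈ S := fun y hy =>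
    hw1sup y (SimpleGraph.Walk.support_bypass_subset _ hy)
  obtain ⟨n₁, hadj, q, hq⟩ := SimpleGraph.Walk.exists_eq_cons_of_ne hne P
  have hn₁S : n₁ ∈ S := hPsup n₁ (by
    rw [hq]
    exact List.mem_cons_of_mem _ q.start_mem_support)
  rcases adj_pr_or hpre R₀ hT hadj with h1 | h2
  · have haR : a ≠ R₀ := by
      intro e; rw [e, pr_root hpre R₀ hT] at h1; exact hadj.ne (e.trans h1)
    exact ⟨h1 ▸ hn₁S, haR⟩
  · exfalso
    have hn₁R : n₁ ≠ R₀ := by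
      intro e; rw [e, pr_root hpre R₀ hT] at h2; exact hadj.ne (h2.symm.trans e.symm)
    have hmem : a ∈ (pathTo hpre R₀ n₁).1.support := by
      rw [support_pr hpre R₀ hT hn₁R, h2]
      exact List.mem_cons_of_mem _ (SimpleGraph.Walk.start_mem_support _)
    have hlt : rk hpre R₀ a < rk hpre R₀ n₁ := by
      have := rk_pr hpre R₀ hT hn₁R; rw [h2] at this; omega
    have hnot : a ∉ q.support := by
      have hp2 := hPpath
      rw [hq] at hp2
      exact ((SimpleGraph.Walk.cons_isPath_iff _ _).mp hp2).2
    have := descend_aux hpre R₀ hT q hnot hmem hlt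
    omega

end Tree


section Main

variable {E : Set (Set V)} {T : SimpleGraph ↥E}

lemma not_mem_self_of_mem_removeVertex {x : V} {K' : Set V} (h : K' ∈ removeVertex E x) :
    x ∉ K' := by
  obtain ⟨K, _, rfl, _⟩ := h
  simp

lemma rk_root (hpre : T.Preconnected) (R₀ : ↥E) (hT : T.IsAcyclic) : rk hpre R₀ R₀ = 0 := by
  unfold rk
  rw [pathTo_root hpre R₀ hT]
  rfl

lemma pr_eq_self_imp (hpre : T.Preconnected) (R₀ : ↥E) (hT : T.IsAcyclic) {a : ↥E}
    (h : pr hpre R₀ a = a) : a = R₀ := by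
  by_contra ha
  exact (adj_pr hpre R₀ hT ha).ne h.symm

open Classical in
/-- The representative in `E` of minimal rank for a hyperedge of `removeVertex E x`. -/
noncomputable def topRep (hpre : T.Preconnected) (R₀ : ↥E) (x : V) (K' : Set V)
    (hK' : K' ∈ removeVertex E x) : ↥E :=
  if h1 : K' ∈ E then
    (if h2 : K' ∪ {x} ∈ E then
      (if rk hpre R₀ ⟨K' ∪ {x}, h2⟩ < rk hpre R₀ ⟨K', h1⟩ then ⟨K' ∪ {x}, h2⟩ else ⟨K', h1⟩)
     else ⟨K', h1⟩)
  else ⟨K' ∪ {x}, by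
    obtain ⟨K, hKE, hKeq, hne⟩ := hK'
    by_cases hx : x ∈ K
    · have : K' ∪ {x} = K := by
        rw [hKeq, Set.diff_union_self, Set.union_eq_self_of_subset_right
          (Set.singleton_subset_iff.mpr hx)]
      exact this ▸ hKE
    · exact absurd (by rw [hKeq, Set.diff_singleton_eq_self hx]; exact hKE) h1⟩

lemma topRep_val (hpre : T.Preconnected) (R₀ : ↥E) (x : V) (K' : Set V)
    (hK' : K' ∈ removeVertex E x) :
    (topRep hpre R₀ x K' hK' : Set V) = K' ∨ (topRep hpre R₀ x K' hK' : Set V) = K' ∪ {x} := by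
  unfold topRep
  split_ifs <;> simp

lemma topRep_diff (hpre : T.Preconnected) (R₀ : ↥E) (x : V) (K' : Set V)
    (hK' : K' ∈ removeVertex E x) :
    (topRep hpre R₀ x K' hK' : Set V) \ {x} = K' := by
  have hx : x ∉ K' := not_mem_self_of_mem_removeVertex hK'
  rcases topRep_val hpre R₀ x K' hK' with h | h <;> rw [h]
  · exact Set.diff_singleton_eq_self hx
  · rw [Set.union_diff_distrib, Set.diff_self, Set.union_empty,
      Set.diff_singleton_eq_self hx]

lemma topRep_mem (hpre : T.Preconnected) (R₀ : ↥E) (x : V) (K' : Set V)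
    (hK' : K' ∈ removeVertex E x) {v : V} (hv : v ∈ K') :
    v ∈ (topRep hpre R₀ x K' hK' : Set V) := by
  rcases topRep_val hpre R₀ x K' hK' with h | h <;> rw [h]
  · exact hv
  · exact Or.inl hv

lemma topRep_min (hpre : T.Preconnected) (R₀ : ↥E) (x : V) (K' : Set V)
    (hK' : K' ∈ removeVertex E x) (K : ↥E) (hdiff : (K : Set V) \ {x} = K') :
    rk hpre R₀ (topRep hpre R₀ x K' hK') ≤ rk hpre R₀ K := by
  have hxK' : x ∉ K' := not_mem_self_of_mem_removeVertex hK'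
  have hcases : (K : Set V) = K' ∨ (K : Set V) = K' ∪ {x} := by
    by_cases hx : x ∈ (K : Set V)
    · right
      rw [← hdiff, Set.diff_union_self, Set.union_eq_self_of_subset_right
        (Set.singleton_subset_iff.mpr hx)]
    · left
      rw [← hdiff, Set.diff_singleton_eq_self hx]
  unfold topRep
  split_ifs with h1 h2 h3
  · rcases hcases with h | h
    · have hK : K = ⟨K', h1⟩ := Subtype.ext h
      rw [hK]; omega
    · have hK : K = ⟨K' ∪ {x}, h2⟩ := Subtype.ext h
      rw [hK]
  · rcases hcases with h | h
    · have hK : K = ⟨K', h1⟩ := Subtype.ext h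
      rw [hK]
    · have hK : K = ⟨K' ∪ {x}, h2⟩ := Subtype.ext h
      rw [hK]; omega
  · rcases hcases with h | h
    · have hK : K = ⟨K', h1⟩ := Subtype.ext h
      rw [hK]
    · exact absurd (h ▸ K.2) h2
  · rcases hcases with h | h
    · exact absurd (h ▸ K.2) h1
    · have hK : (K : Set V) = K' ∪ {x} := h
      have h2 : K' ∪ {x} ∈ E := hK ▸ K.2
      have : K = (⟨K' ∪ {x}, h2⟩ : ↥E) := Subtype.ext hK
      rw [this]

open Classical in
/-- Iterated parent skipping nodes whose shadow is empty. -/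
noncomputable def upF (hpre : T.Preconnected) (R₀ : ↥E) (hT : T.IsAcyclic) (x : V)
    (a : ↥E) : ↥E :=
  if h : (((pr hpre R₀ a).1 : Set V) \ {x} = ∅) ∧ pr hpre R₀ a ≠ a then
    upF hpre R₀ hT x (pr hpre R₀ a)
  else pr hpre R₀ a
termination_by rk hpre R₀ a
decreasing_by
  have ha : a ≠ R₀ := fun e => h.2 (by rw [e]; exact pr_root hpre R₀ hT)
  have := rk_pr hpre R₀ hT ha
  omega

lemma upF_rk_aux (hpre : T.Preconnected) (R₀ : ↥E) (hT : T.IsAcyclic) (x : V) :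
    ∀ (n : ℕ) (a : ↥E), rk hpre R₀ a ≤ n → a ≠ R₀ →
      rk hpre R₀ (upF hpre R₀ hT x a) < rk hpre R₀ a := by
  intro n
  induction n with
  | zero =>
    intro a hle ha
    exact absurd (Nat.le_zero.mp hle) (by
      intro h0
      exact ha (SimpleGraph.Walk.eq_of_length_eq_zero h0))
  | succ n ih =>
    intro a hle ha
    have hrk := rk_pr hpre R₀ hT ha
    rw [upF]
    split_ifs with h
    · by_cases hpR : pr hpre R₀ a = R₀
      · rw [hpR, upF]
        have hroot : pr hpre R₀ R₀ = R₀ := pr_root hpre R₀ hT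
        split_ifs with h2
        · exact absurd hroot h2.2
        · rw [hroot, rk_root hpre R₀ hT]; omega
      · have := ih (pr hpre R₀ a) (by omega) hpR
        omega
    · omega

lemma upF_rk (hpre : T.Preconnected) (R₀ : ↥E) (hT : T.IsAcyclic) (x : V) {a : ↥E}
    (ha : a ≠ R₀) : rk hpre R₀ (upF hpre R₀ hT x a) < rk hpre R₀ a :=
  upF_rk_aux hpre R₀ hT x (rk hpre R₀ a) a le_rfl ha

lemma upF_diff_aux (hpre : T.Preconnected) (R₀ : ↥E) (hT : T.IsAcyclic) (x : V)
    (hR : (R₀ : Set V) \ {x} ≠ ∅) :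
    ∀ (n : ℕ) (a : ↥E), rk hpre R₀ a ≤ n → a ≠ R₀ →
      (upF hpre R₀ hT x a : Set V) \ {x} ≠ ∅ := by
  intro n
  induction n with
  | zero =>
    intro a hle ha
    exact absurd (SimpleGraph.Walk.eq_of_length_eq_zero (Nat.le_zero.mp hle)) ha
  | succ n ih =>
    intro a hle ha
    have hrk := rk_pr hpre R₀ hT ha
    rw [upF]
    split_ifs with h
    · have hpR : pr hpre R₀ a ≠ R₀ := by
        intro e
        exact hR (by rw [← e]; exact h.1)
      exact ih (pr hpre R₀ a) (by omega) hpR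
    · intro hempty
      rcases not_and_or.mp h with h' | h'
      · exact h' hempty
      · push_neg at h'
        exact ha (pr_eq_self_imp hpre R₀ hT h')

lemma upF_diff (hpre : T.Preconnected) (R₀ : ↥E) (hT : T.IsAcyclic) (x : V)
    (hR : (R₀ : Set V) \ {x} ≠ ∅) {a : ↥E} (ha : a ≠ R₀) :
    (upF hpre R₀ hT x a : Set V) \ {x} ≠ ∅ :=
  upF_diff_aux hpre R₀ hT x hR (rk hpre R₀ a) a le_rfl ha

lemma upF_eq_pr (hpre : T.Preconnected) (R₀ : ↥E) (hT : T.IsAcyclic) (x : V) {a : ↥E}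
    (hpr : ((pr hpre R₀ a).1 : Set V) \ {x} ≠ ∅) :
    upF hpre R₀ hT x a = pr hpre R₀ a := by
  rw [upF]
  split_ifs with h
  · exact absurd h.1 hpr
  · rfl

end Main


section Final

lemma alphaAcyclic_removeVertex {E : Set (Set V)} (x : V) (h : AlphaAcyclic E) :
    AlphaAcyclic (removeVertex E x) := by
  classical
  rcases (removeVertex E x).eq_empty_or_nonempty with hemp | ⟨K'0, hK'0⟩
  · have hfalse : ∀ A : ↥(removeVertex E x), False := fun A =>
      Set.notMem_empty A.1 (hemp ▸ A.2)
    refine ⟨⊥, ?_, ?_, ?_⟩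
    · intro v c _
      exact (hfalse v).elim
    · intro v
      exact (hfalse v).elim
    · intro v A
      exact (hfalse A.1).elim
  · obtain ⟨T, hTacyc, hTpre, hTjoin⟩ := h
    obtain ⟨K0, hK0E, hK0eq, hK0ne⟩ := hK'0
    set R₀ : ↥E := ⟨K0, hK0E⟩ with hR₀def
    have hRsh : (R₀ : Set V) \ {x} ≠ ∅ := by
      show K0 \ {x} ≠ ∅
      rw [← hK0eq]
      exact hK0ne
    set tp : ↥(removeVertex E x) → ↥E := fun K' => topRep hTpre R₀ x K'.1 K'.2 with htp
    set rks : ↥(removeVertex E x) → ℕ := fun K' => rk hTpre R₀ (tp K') with hrks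
    have hK'0mem : K'0 ∈ removeVertex E x := ⟨K0, hK0E, hK0eq, hK0ne⟩
    have hparmem : ∀ K' : ↥(removeVertex E x), tp K' ≠ R₀ →
        ((upF hTpre R₀ hTacyc x (tp K') : Set V) \ {x}) ∈ removeVertex E x := by
      intro K' htop
      exact ⟨(upF hTpre R₀ hTacyc x (tp K') : Set V), (upF hTpre R₀ hTacyc x (tp K')).2,
        rfl, upF_diff hTpre R₀ hTacyc x hRsh htop⟩
    set par : ↥(removeVertex E x) → ↥(removeVertex E x) := fun K' =>
      if htop : tp K' = R₀ then K'
      else ⟨(upF hTpre R₀ hTacyc x (tp K') : Set V) \ {x}, hparmem K' htop⟩ with hpar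
    have hstep : ∀ A : ↥(removeVertex E x), tp A ≠ R₀ → rks (par A) < rks A := by
      intro A htop
      have h1 : par A = ⟨(upF hTpre R₀ hTacyc x (tp A) : Set V) \ {x}, hparmem A htop⟩ := by
        rw [hpar]
        simp only [htop, dite_false]
      rw [h1]
      calc rks ⟨(upF hTpre R₀ hTacyc x (tp A) : Set V) \ {x}, hparmem A htop⟩
          ≤ rk hTpre R₀ (upF hTpre R₀ hTacyc x (tp A)) :=
            topRep_min hTpre R₀ x _ _ (upF hTpre R₀ hTacyc x (tp A)) rfl
        _ < rk hTpre R₀ (tp A) := upF_rk hTpre R₀ hTacyc x htop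
    have hp : ∀ A, par A ≠ A → rks (par A) < rks A := by
      intro A hne
      by_cases htop : tp A = R₀
      · exact absurd (by rw [hpar]; simp only [htop, dite_true]) hne
      · exact hstep A htop
    have hfix : ∀ A, par A = A → A = ⟨K'0, hK'0mem⟩ := by
      intro A hfixA
      by_cases htop : tp A = R₀
      · apply Subtype.ext
        have hdiff := topRep_diff hTpre R₀ x A.1 A.2
        rw [show topRep hTpre R₀ x A.1 A.2 = tp A from rfl, htop] at hdiff
        rw [← hdiff]
        exact hK0eq.symm
      · exact absurd hfixA (fun e => absurd (hstep A htop) (by rw [e]; omega))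
    refine ⟨pgraph par, pgraph_isAcyclic (r := rks) hp, ?_, ?_⟩
    · intro A B
      exact (pgraph_reachable_root (r := rks) hp ⟨K'0, hK'0mem⟩ hfix A).trans
        (pgraph_reachable_root (r := rks) hp ⟨K'0, hK'0mem⟩ hfix B).symm
    · intro v
      apply pgraph_induce_preconnected (r := rks)
      intro A B hA hB hAB hle
      have hvA : v ∈ A.1 := hA
      have hvB : v ∈ B.1 := hB
      have hvx : v ≠ x := fun e => not_mem_self_of_mem_removeVertex A.2 (e ▸ hvA)
      have hta : v ∈ (tp A : Set V) := topRep_mem hTpre R₀ x A.1 A.2 hvA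
      have htb : v ∈ (tp B : Set V) := topRep_mem hTpre R₀ x B.1 B.2 hvB
      have htne : tp A ≠ tp B := by
        intro e
        apply hAB
        apply Subtype.ext
        have h1 := topRep_diff hTpre R₀ x A.1 A.2
        have h2 := topRep_diff hTpre R₀ x B.1 B.2
        rw [show topRep hTpre R₀ x A.1 A.2 = tp A from rfl] at h1
        rw [show topRep hTpre R₀ x B.1 B.2 = tp B from rfl] at h2
        rw [← h1, ← h2, e]
      obtain ⟨hprS, haR⟩ := tree_step hTpre R₀ hTacyc {K : ↥E | v ∈ (K : Set V)}
        (hTjoin v) hta htb htne hle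
      have hprsh : ((pr hTpre R₀ (tp A)).1 : Set V) \ {x} ≠ ∅ := by
        intro hempty
        have hvin : v ∈ ((pr hTpre R₀ (tp A)).1 : Set V) \ {x} := ⟨hprS, hvx⟩
        rw [hempty] at hvin
        exact hvin
      have hupf : upF hTpre R₀ hTacyc x (tp A) = pr hTpre R₀ (tp A) :=
        upF_eq_pr hTpre R₀ hTacyc x hprsh
      have h1 : par A = ⟨(upF hTpre R₀ hTacyc x (tp A) : Set V) \ {x}, hparmem A haR⟩ := by
        rw [hpar]
        exact dif_neg haR
      constructor
      · show v ∈ (par A).1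
        rw [h1]
        show v ∈ (upF hTpre R₀ hTacyc x (tp A) : Set V) \ {x}
        rw [hupf]
        exact ⟨hprS, hvx⟩
      · exact hstep A haR

end Final


end SignedAcyclicAux

/-- If a signed hypergraph is signed-acyclic, then removing a vertex `x`
from every (positive and negative) hyperedge preserves signed-acyclicity. -/
theorem signedAcyclic_removeVertex (Ep En : Set (Set V)) (x : V)
    (h : SignedAcyclic Ep En) :
    SignedAcyclic (removeVertex Ep x) (removeVertex En x) := by
  intro S hS
  have hS' : {K | K ∈ En ∧ K \ {x} ∈ S} ⊆ En := fun K hK => hK.1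
  have hAA := h _ hS'
  have hEq : removeVertex (Ep ∪ {K | K ∈ En ∧ K \ {x} ∈ S}) x = removeVertex Ep x ∪ S := by
    ext K'
    constructor
    · rintro ⟨K, hK, rfl, hne⟩
      rcases hK with hK | hK
      · exact Or.inl ⟨K, hK, rfl, hne⟩
      · exact Or.inr hK.2
    · rintro (⟨K, hK, rfl, hne⟩ | hKS)
      · exact ⟨K, Or.inl hK, rfl, hne⟩
      · obtain ⟨K, hKEn, hKeq, hne⟩ := hS hKS
        exact ⟨K, Or.inr ⟨hKEn, by rw [← hKeq]; exact hKS⟩, hKeq, hne⟩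
  rw [← hEq]
  exact SignedAcyclicAux.alphaAcyclic_removeVertex x hAA
end

section
/- If a signed hypergraph H = (V, E⁺, E⁻) is signed-acyclic, R ∈ E⁺ ∪ E⁻ and S ∈ E⁺ are distinct hyperedges with R ⊆ S, then the signed hypergraph obtained by deleting R from H is also signed-acyclic. -/
variable {V : Type*}

open SimpleGraph

section AuxTree

variable {α : Type*} {G : SimpleGraph α}

lemma aux_isPath_concat {u v w : α} {p : G.Walk u v} (hp : p.IsPath) (hw : w ∉ p.support)
    (h : G.Adj v w) : (p.concat h).IsPath := by
  rw [← Walk.isPath_reverse_iff, Walk.reverse_concat, Walk.cons_isPath_iff]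
  exact ⟨hp.reverse, by simp [Walk.support_reverse, hw]⟩

lemma aux_dist_ne (hG : G.IsAcyclic) (hc : G.Connected) {r a b : α} (hab : G.Adj a b) :
    G.dist r a ≠ G.dist r b := by
  classical
  intro hEq
  obtain ⟨p, hp, hpl⟩ := hc.exists_path_of_dist r a
  by_cases hb : b ∈ p.support
  · have h1 : G.dist r b ≤ (p.takeUntil b hb).length := dist_le _
    have h2 := congrArg Walk.length (p.take_spec hb)
    rw [Walk.length_append] at h2
    have h3 : (p.dropUntil b hb).length ≠ 0 := fun h0 => hab.ne' (Walk.eq_of_length_eq_zero h0)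
    omega
  · have hq : (p.concat hab).IsPath := aux_isPath_concat hp hb hab
    obtain ⟨q, hqp, hql⟩ := hc.exists_path_of_dist r b
    have heq := hG.path_unique ⟨p.concat hab, hq⟩ ⟨q, hqp⟩
    have hl := congrArg (fun w : G.Path r b => (w : G.Walk r b).length) heq
    simp only [Walk.length_concat] at hl
    omega

lemma aux_getVert_concat_self {u v w : α} (p : G.Walk u v) (h : G.Adj v w) :
    (p.concat h).getVert p.length = v := by
  rw [Walk.concat_eq_append, Walk.getVert_append]
  simp

lemma aux_parent_unique (hG : G.IsAcyclic) (hc : G.Connected) {r x b b' : α}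
    (h1 : G.Adj x b) (h2 : G.Adj x b')
    (hd1 : G.dist r b + 1 = G.dist r x) (hd2 : G.dist r b' + 1 = G.dist r x) : b = b' := by
  classical
  obtain ⟨p, hp, hpl⟩ := hc.exists_path_of_dist r b
  obtain ⟨q, hq, hql⟩ := hc.exists_path_of_dist r b'
  have hxp : x ∉ p.support := by
    intro hx
    have ha := dist_le (p.takeUntil x hx)
    have hb := p.length_takeUntil_le hx
    omega
  have hxq : x ∉ q.support := by
    intro hx
    have ha := dist_le (q.takeUntil x hx)
    have hb := q.length_takeUntil_le hx
    omega
  have hP : (p.concat h1.symm).IsPath := aux_isPath_concat hp hxp h1.symm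
  have hQ : (q.concat h2.symm).IsPath := aux_isPath_concat hq hxq h2.symm
  have heq := hG.path_unique ⟨p.concat h1.symm, hP⟩ ⟨q.concat h2.symm, hQ⟩
  have hw : p.concat h1.symm = q.concat h2.symm := congrArg Subtype.val heq
  have hv := congrArg (fun w : G.Walk r x => w.getVert p.length) hw
  rw [aux_getVert_concat_self] at hv
  have hlen : p.length = q.length := by omega
  rw [hlen, aux_getVert_concat_self] at hv
  exact hv

lemma aux_rank_acyclic (G : SimpleGraph α) (rk : α → ℕ)
    (h1 : ∀ a b, G.Adj a b → rk a ≠ rk b)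
    (h2 : ∀ a b b', G.Adj a b → G.Adj a b' → rk b < rk a → rk b' < rk a → b = b') :
    G.IsAcyclic := by
  classical
  intro u c hc
  have hne : c.support ≠ [] := c.support_ne_nil
  obtain ⟨m, hm⟩ : ∃ m, m ∈ List.argmax rk c.support := by
    cases hargmax : List.argmax rk c.support with
    | none => exact absurd (List.argmax_eq_none.mp hargmax) hne
    | some m => exact ⟨m, by simp [hargmax]⟩
  have hmc : m ∈ c.support := List.argmax_mem hm
  have hmax : ∀ a ∈ c.support, rk a ≤ rk m := fun a ha => List.le_of_mem_argmax ha hm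
  have hmax2 : ∀ a ∈ (c.rotate m hmc).support, rk a ≤ rk m := by
    intro a ha
    rw [Walk.mem_support_iff] at ha
    rcases ha with rfl | ha
    · exact hmax _ hmc
    · exact hmax a (List.mem_of_mem_tail (((c.support_rotate m hmc).mem_iff).mp ha))
  have hc2 : (c.rotate m hmc).IsCycle := hc.rotate hmc
  revert hmax2 hc2
  generalize (c.rotate m hmc) = c2
  intro hmax2 hc2
  cases c2 with
  | nil => exact Walk.IsCycle.not_of_nil hc2
  | @cons _ b _ h q =>
    have h3 := hc2.three_le_length
    rw [Walk.length_cons] at h3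
    rw [Walk.cons_isCycle_iff] at hc2
    obtain ⟨hqp, hedge⟩ := hc2
    have hqd : q.darts ≠ [] := by
      intro h0
      have hl : q.darts.length = q.length := Walk.length_darts q
      rw [h0] at hl
      simp at hl
      omega
    set d := q.darts.getLast hqd with hddef
    have hd_mem : d ∈ q.darts := List.getLast_mem hqd
    have hdsnd : d.snd = m := by rw [hddef, Walk.getLast_darts_eq_lastDart]; rfl
    have hadj2 : G.Adj m d.fst := by
      have := d.adj
      rw [hdsnd] at this
      exact this.symm
    have hfst_mem : d.fst ∈ q.support := q.dart_fst_mem_support_of_mem_darts hd_mem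
    have hrb : rk b < rk m :=
      lt_of_le_of_ne (hmax2 b (by simp [Walk.support_cons])) (fun hEq => h1 m b h hEq.symm)
    have hrd : rk d.fst < rk m :=
      lt_of_le_of_ne (hmax2 d.fst (by simp [Walk.support_cons, hfst_mem]))
        (fun hEq => h1 m d.fst hadj2 hEq.symm)
    have hbd : b = d.fst := h2 m b d.fst h hadj2 hrb hrd
    apply hedge
    have hmem : d.edge ∈ q.edges := by
      rw [Walk.edges]
      exact List.mem_map_of_mem hd_mem
    have hde : d.edge = s(m, b) := by
      rw [Sym2.eq_swap]
      rw [hbd]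
      rw [← hdsnd]
      rfl
    rwa [hde] at hmem

end AuxTree

lemma alphaAcyclic_diff (E : Set (Set V)) {R S : Set V} (hR : R ∈ E) (hS : S ∈ E)
    (hne : R ≠ S) (hsub : R ⊆ S) : AlphaAcyclic E → AlphaAcyclic (E \ {R}) := by
  rintro ⟨T, hac, hconn, hind⟩
  classical
  set r : ↥E := ⟨R, hR⟩ with hrdef
  set s : ↥E := ⟨S, hS⟩ with hsdef
  haveI : Nonempty ↥E := ⟨r⟩
  have hTconn : T.Connected := ⟨hconn⟩
  have hrs : r ≠ s := fun h => hne (congrArg Subtype.val h)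
  obtain ⟨w0⟩ := hconn r s
  have hpp : w0.bypass.IsPath := w0.bypass_isPath
  have hpnil : ¬ w0.bypass.Nil := Walk.not_nil_of_ne hrs
  set k₁ : ↥E := w0.bypass.getVert 1 with hk1def
  have hadj_rk : T.Adj r k₁ := w0.bypass.adj_snd hpnil
  have hk1r : k₁ ≠ r := fun h => T.irrefl (h ▸ hadj_rk)
  have hk1mem : k₁ ∈ w0.bypass.support := by
    have h1 := w0.bypass.tail.start_mem_support
    have h2 := Walk.cons_support_tail hpnil
    rw [← h2]
    exact List.mem_cons_of_mem _ h1
  -- R ⊆ K₁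
  have hRk1 : ∀ x : V, x ∈ R → x ∈ (k₁ : Set V) := by
    intro x hx
    have hsx : x ∈ S := hsub hx
    obtain ⟨wv⟩ := hind x ⟨r, hx⟩ ⟨s, hsx⟩
    set wm : T.Walk r s := wv.map (SimpleGraph.Embedding.induce _).toHom with hwmdef
    have hbeq : w0.bypass = wm.bypass := by
      have := hac.path_unique ⟨w0.bypass, hpp⟩ ⟨wm.bypass, wm.bypass_isPath⟩
      exact congrArg Subtype.val this
    have hk1' : k₁ ∈ wm.support := wm.support_bypass_subset (hbeq ▸ hk1mem)
    replace hk1' : k₁ ∈ wv.support.map (SimpleGraph.Embedding.induce (G := T) _).toHom := by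
      rw [← Walk.support_map]; exact hk1'
    obtain ⟨y, hy, hyk⟩ := List.mem_map.mp hk1'
    have := y.2
    rw [← hyk]
    exact this
  -- setup of the contracted graph
  have hk1E' : (k₁ : Set V) ∈ E \ {R} := by
    refine ⟨k₁.2, ?_⟩
    simp only [Set.mem_singleton_iff]
    exact fun h => hk1r (Subtype.ext h)
  set k' : ↥(E \ {R}) := ⟨(k₁ : Set V), hk1E'⟩ with hk'def
  set ι : ↥(E \ {R}) → ↥E := fun A => ⟨A.1, A.2.1⟩ with hιdef
  have hιinj : Function.Injective ι := fun A B h => Subtype.ext (congrArg Subtype.val h : (ι A : Set V) = (ι B : Set V))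
  have hιr : ∀ A, ι A ≠ r := by
    intro A h
    exact A.2.2 (congrArg Subtype.val h)
  set f : ↥E → ↥(E \ {R}) := fun a =>
    if h : a = r then k' else ⟨a.1, a.2, fun hh => h (Subtype.ext hh)⟩ with hfdef
  have hfr : f r = k' := dif_pos rfl
  have hfι : ∀ A, f (ι A) = A := by
    intro A
    rw [hfdef]
    simp only [dif_neg (hιr A)]
    rfl
  have hf_ne : ∀ a : ↥E, a ≠ r → ι (f a) = a := by
    intro a ha
    rw [hfdef]
    simp only [dif_neg ha]
    rfl
  have hfv : ∀ (a : ↥E) (x : V), x ∈ (a : Set V) → x ∈ ((f a : ↥(E \ {R})) : Set V) := by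
    intro a x hx
    by_cases ha : a = r
    · subst ha
      rw [hfr]
      exact hRk1 x hx
    · rw [hfdef]
      simp only [dif_neg ha]
      exact hx
  set T' : SimpleGraph ↥(E \ {R}) :=
    { Adj := fun A B => A ≠ B ∧ ∃ a b : ↥E, f a = A ∧ f b = B ∧ T.Adj a b
      symm := by
        constructor
        rintro A B ⟨hAB, a, b, ha, hb, hadj⟩
        exact ⟨hAB.symm, b, a, hb, ha, hadj.symm⟩
      loopless := by
        constructor
        rintro A ⟨hAA, -⟩
        exact hAA rfl } with hT'def
  have hT'adj : ∀ A B, T'.Adj A B ↔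
      (A ≠ B ∧ ∃ a b : ↥E, f a = A ∧ f b = B ∧ T.Adj a b) := fun A B => Iff.rfl
  set rank : ↥(E \ {R}) → ℕ := fun A => if A = k' then 0 else T.dist r (ι A) with hrankdef
  have hrank0 : ∀ A, rank A = 0 ↔ A = k' := by
    intro A
    rw [hrankdef]
    by_cases hA : A = k'
    · simp [hA]
    · simp only [if_neg hA]
      constructor
      · intro h0
        exact absurd (Subtype.ext (congrArg Subtype.val ((hTconn.dist_eq_zero_iff).mp h0).symm) : ι A = r) (hιr A)
      · exact fun h => absurd h hA
  have hfk : ∀ a : ↥E, f a ≠ k' → (ι (f a) = a ∧ a ≠ r) := by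
    intro a ha
    have har : a ≠ r := fun h => ha (by rw [h, hfr])
    exact ⟨hf_ne a har, har⟩
  have hdk1 : T.dist r k₁ = 1 := dist_eq_one_iff_adj.mpr hadj_rk
  have hιk' : ι k' = k₁ := Subtype.ext rfl
  -- RA
  have hRA : ∀ A B, T'.Adj A B → rank A ≠ rank B := by
    rintro A B ⟨hAB, a, b, ha, hb, hadj⟩
    by_cases hAk : A = k' <;> by_cases hBk : B = k'
    · exact absurd (hAk.trans hBk.symm) hAB
    · rw [hrankdef]
      simp only [if_pos hAk, if_neg hBk]
      intro h0
      exact absurd ((hrank0 B).mp (by rw [hrankdef]; simp only [if_neg hBk]; exact h0.symm)) hBk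
    · rw [hrankdef]
      simp only [if_neg hAk, if_pos hBk]
      intro h0
      exact absurd ((hrank0 A).mp (by rw [hrankdef]; simp only [if_neg hAk]; exact h0)) hAk
    · obtain ⟨ha1, -⟩ := hfk a (ha ▸ hAk)
      obtain ⟨hb1, -⟩ := hfk b (hb ▸ hBk)
      have hadj' : T.Adj (ι A) (ι B) := by
        rw [← ha, ← hb, ha1, hb1]
        exact hadj
      rw [hrankdef]
      simp only [if_neg hAk, if_neg hBk]
      exact aux_dist_ne hac hTconn hadj'
  -- RB
  have hRB : ∀ A B B', T'.Adj A B → T'.Adj A B' → rank B < rank A → rank B' < rank A → B = B' := by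
    intro A B B' hB hB' hlt hlt'
    have hAk : A ≠ k' := by
      intro h
      rw [(by rw [hrankdef]; simp [h] : rank A = 0)] at hlt
      omega
    have hdA : rank A = T.dist r (ι A) := by rw [hrankdef]; simp [hAk]
    by_cases hd1 : T.dist r (ι A) = 1
    · have key : ∀ C, rank C < rank A → C = k' := by
        intro C hC
        rw [hdA, hd1] at hC
        exact (hrank0 C).mp (by omega)
      rw [key B hlt, key B' hlt']
    · have hdApos : 0 < T.dist r (ι A) := by rw [← hdA]; omega
      have hd2 : 2 ≤ T.dist r (ι A) := by omega
      have key : ∀ C, T'.Adj A C → rank C < rank A →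
          T.Adj (ι A) (ι C) ∧ T.dist r (ι C) + 1 = T.dist r (ι A) := by
        rintro C ⟨hAC, a, b, ha, hb, hadj⟩ hC
        obtain ⟨ha1, har⟩ := hfk a (ha ▸ hAk)
        have hιA : ι A = a := by rw [← ha]; exact ha1
        by_cases hbR : b = r
        · exfalso
          have hra : T.Adj r (ι A) := by rw [hιA]; exact (hbR ▸ hadj).symm
          have hle : T.dist r (ι A) ≤ 1 := by
            have h9 := dist_le (Walk.cons hra Walk.nil)
            simpa using h9
          omega
        · have hιC : ι C = b := by rw [← hb]; exact hf_ne b hbR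
          refine ⟨by rw [hιA, hιC]; exact hadj, ?_⟩
          have htri := hTconn.dist_triangle (u := r) (v := ι C) (w := ι A)
          have hle1 : T.dist (ι C) (ι A) ≤ 1 := by
            have h9 := dist_le (Walk.cons (show T.Adj (ι C) (ι A) by rw [hιA, hιC]; exact hadj.symm) Walk.nil)
            simpa using h9
          have hub : T.dist r (ι C) + 1 ≤ T.dist r (ι A) := by
            by_cases hCk : C = k'
            · have : T.dist r (ι C) = 1 := by rw [hCk, hιk']; exact hdk1
              omega
            · have : rank C = T.dist r (ι C) := by rw [hrankdef]; simp [hCk]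
              rw [hdA, this] at hC
              omega
          omega
      obtain ⟨hA1, hD1⟩ := key B hB hlt
      obtain ⟨hA2, hD2⟩ := key B' hB' hlt'
      rw [← hdA] at hD1 hD2
      rw [hdA] at hD1 hD2
      exact hιinj (aux_parent_unique hac hTconn hA1 hA2 hD1 hD2)
  -- acyclicity
  have hT'ac : T'.IsAcyclic := aux_rank_acyclic T' rank hRA hRB
  -- pushing walks
  have push : ∀ {a b : ↥E}, T.Walk a b → T'.Reachable (f a) (f b) := by
    intro a b w
    induction w with
    | nil => exact Reachable.refl _
    | @cons x y z hxy p ih =>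
      by_cases hf : f x = f y
      · rwa [hf]
      · exact ((show T'.Adj (f x) (f y) from ⟨hf, x, y, rfl, rfl, hxy⟩).reachable).trans ih
  have hT'conn : T'.Preconnected := by
    intro A B
    obtain ⟨w⟩ := hconn (ι A) (ι B)
    have := push w
    rwa [hfι, hfι] at this
  -- induced connectivity
  have hT'ind : ∀ v : V, (T'.induce {K : ↥(E \ {R}) | v ∈ (K : Set V)}).Preconnected := by
    intro v
    have push2 : ∀ {x y : {K : ↥E | v ∈ (K : Set V)}} (w : (T.induce {K : ↥E | v ∈ (K : Set V)}).Walk x y),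
        (T'.induce {K : ↥(E \ {R}) | v ∈ (K : Set V)}).Reachable
          ⟨f x.1, hfv x.1 v x.2⟩ ⟨f y.1, hfv y.1 v y.2⟩ := by
      intro x y w
      induction w with
      | nil => exact Reachable.refl _
      | @cons x y z hxy p ih =>
        by_cases hf : f x.1 = f y.1
        · have : (⟨f x.1, hfv x.1 v x.2⟩ : {K : ↥(E \ {R}) | v ∈ (K : Set V)}) =
              ⟨f y.1, hfv y.1 v y.2⟩ := Subtype.ext hf
          rwa [this]
        · refine (SimpleGraph.Adj.reachable ?_).trans ih
          show T'.Adj (f x.1) (f y.1)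
          exact ⟨hf, x.1, y.1, rfl, rfl, hxy⟩
    intro A B
    obtain ⟨w⟩ := hind v ⟨ι A.1, A.2⟩ ⟨ι B.1, B.2⟩
    have := push2 w
    have hA : (⟨f (ι A.1), hfv (ι A.1) v A.2⟩ : {K : ↥(E \ {R}) | v ∈ (K : Set V)}) = A :=
      Subtype.ext (hfι A.1)
    have hB : (⟨f (ι B.1), hfv (ι B.1) v B.2⟩ : {K : ↥(E \ {R}) | v ∈ (K : Set V)}) = B :=
      Subtype.ext (hfι B.1)
    rwa [hA, hB] at this
  exact ⟨T', hT'ac, hT'conn, hT'ind⟩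

/-- If a signed hypergraph is signed-acyclic, `R ∈ E⁺ ∪ E⁻` and `S ∈ E⁺` are
distinct hyperedges with `R ⊆ S`, then deleting `R` preserves signed-acyclicity. -/
theorem signedAcyclic_deleteSubedge (Ep En : Set (Set V)) (R S : Set V)
    (hR : R ∈ Ep ∪ En) (hS : S ∈ Ep) (hne : R ≠ S) (hsub : R ⊆ S)
    (h : SignedAcyclic Ep En) :
    SignedAcyclic (Ep \ {R}) (En \ {R}) := by
  intro S' hS'
  by_cases hRp : R ∈ Ep
  · have h1 : (Ep \ {R}) ∪ S' = (Ep ∪ S') \ {R} := by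
      ext x
      have hx' : x ∈ S' → x ∉ ({R} : Set (Set V)) := fun hx => (hS' hx).2
      simp only [Set.mem_union, Set.mem_diff] at *
      tauto
    rw [h1]
    exact alphaAcyclic_diff _ (Set.mem_union_left _ hRp) (Set.mem_union_left _ hS) hne hsub
      (h S' fun x hx => (hS' hx).1)
  · have h2 : (Ep \ {R}) ∪ S' = Ep ∪ S' := by
      have : Ep \ {R} = Ep := by
        ext x
        simp only [Set.mem_diff, Set.mem_singleton_iff]
        exact ⟨fun hx => hx.1, fun hx => ⟨hx, fun hh => hRp (hh ▸ hx)⟩⟩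
      rw [this]
    rw [h2]
    exact h S' fun x hx => (hS' hx).1
end

section
/- Let H be a signed-acyclic signed hypergraph and x a signed-leaf of H with pivot hyperedge R_x. Let S_x = {K ∈ E⁺ ∪ E⁻ : K ≠ R_x, K ⊆ R_x}. Then the signed hypergraph obtained from H by deleting all hyperedges in S_x and then removing the vertex x is also signed-acyclic. -/
variable {V : Type*}

/-- `Rx` is a pivot hyperedge witnessing that `x` is a signed-leaf of `(V, E⁺, E⁻)`:
`Rx` is a positive hyperedge containing `x`, every positive hyperedge containing `x`
is included in `Rx`, and `{N ∈ E⁻ | x ∈ N, N ⊄ Rx} ∪ {Rx}` is a chain under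
inclusion with `Rx` as its minimal element. -/
def IsPivot (Ep En : Set (Set V)) (x : V) (Rx : Set V) : Prop :=
  Rx ∈ Ep ∧ x ∈ Rx ∧ (∀ R ∈ Ep, x ∈ R → R ⊆ Rx) ∧
    IsChain (· ⊆ ·) ({N | N ∈ En ∧ x ∈ N ∧ ¬ N ⊆ Rx} ∪ {Rx}) ∧
    ∀ N ∈ ({N | N ∈ En ∧ x ∈ N ∧ ¬ N ⊆ Rx} ∪ {Rx} : Set (Set V)), Rx ⊆ N

/-- `x` is a signed-leaf of `(V, E⁺, E⁻)`. -/
def IsSignedLeaf (Ep En : Set (Set V)) (x : V) : Prop :=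
  ∃ Rx, IsPivot Ep En x Rx

/-- The set `S_x` of hyperedges (other than the pivot `Rx`) included in the pivot. -/
def leafSx (Ep En : Set (Set V)) (Rx : Set V) : Set (Set V) :=
  {K | K ∈ Ep ∪ En ∧ K ≠ Rx ∧ K ⊆ Rx}

/-- Positive hyperedges after removing the signed-leaf `x` with pivot `Rx`:
delete all hyperedges in `S_x`, then remove the vertex `x`. -/
def removeLeafPos (Ep En : Set (Set V)) (x : V) (Rx : Set V) : Set (Set V) :=
  removeVertex (Ep \ leafSx Ep En Rx) x

/-- Negative hyperedges after removing the signed-leaf `x` with pivot `Rx`. -/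
def removeLeafNeg (Ep En : Set (Set V)) (x : V) (Rx : Set V) : Set (Set V) :=
  removeVertex (En \ leafSx Ep En Rx) x


section Helpers

open SimpleGraph

variable {α : Type*}

/-- From a walk in the ambient graph whose support lies in `s`, get reachability
in the induced subgraph. -/
lemma reachable_induce_of_walk {G : SimpleGraph α} {s : Set α} {a b : α}
    (w : G.Walk a b) (hs : ∀ c ∈ w.support, c ∈ s) (ha : a ∈ s) (hb : b ∈ s) :
    (G.induce s).Reachable ⟨a, ha⟩ ⟨b, hb⟩ := by
  induction w with
  | nil => exact Reachable.refl _
  | @cons a a' b h w ih =>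
    have ha' : a' ∈ s := hs a' (by simp)
    have hadj : (G.induce s).Adj ⟨a, ha⟩ ⟨a', ha'⟩ := h
    exact hadj.reachable.trans (ih (fun c hc => hs c (by simp [hc])) ha' hb)

/-- From a walk in an induced subgraph, get a walk in the ambient graph with
support inside `s`. -/
lemma exists_walk_of_induce {G : SimpleGraph α} {s : Set α} {a b : ↥s}
    (w : (G.induce s).Walk a b) : ∃ w' : G.Walk ↑a ↑b, ∀ c ∈ w'.support, c ∈ s := by
  induction w with
  | @nil u => exact ⟨Walk.nil, by rintro c hc; simp at hc; subst hc; exact u.2⟩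
  | @cons a a' b h w ih =>
    obtain ⟨w', hw'⟩ := ih
    refine ⟨Walk.cons (show G.Adj a a' from h) w', ?_⟩
    intro c hc
    rw [Walk.support_cons] at hc
    rcases List.mem_cons.mp hc with h1 | h2
    · subst h1; exact a.2
    · exact hw' c h2

/-- In an acyclic graph, if the induced subgraph on `s` is preconnected and `a b ∈ s`,
then every vertex on any path from `a` to `b` lies in `s`. -/
lemma mem_of_isPath_support {G : SimpleGraph α} (hac : G.IsAcyclic) {s : Set α}
    (hs : (G.induce s).Preconnected) {a b : α} (ha : a ∈ s) (hb : b ∈ s)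
    {w : G.Walk a b} (hw : w.IsPath) : ∀ c ∈ w.support, c ∈ s := by
  classical
  obtain ⟨ω⟩ := hs ⟨a, ha⟩ ⟨b, hb⟩
  obtain ⟨w', hw'⟩ := exists_walk_of_induce ω
  have hbp : w'.bypass.IsPath := w'.bypass_isPath
  have heq : (⟨w, hw⟩ : G.Path a b) = ⟨w'.bypass, hbp⟩ :=
    isAcyclic_iff_path_unique.mp hac _ _
  have hsup : w.support = w'.bypass.support := by
    have := congrArg (fun (q : G.Path a b) => (q : G.Walk a b).support) heq
    simpa using this
  intro c hc
  exact hw' c (w'.support_bypass_subset (hsup ▸ hc))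

/-- The quotient of a graph `T` on `α` along a map `p` valued in `σ`. -/
def quotGraph (T : SimpleGraph α) (σ : Set α) (p : α → α) : SimpleGraph ↥σ where
  Adj B C := B ≠ C ∧ ∃ u v, T.Adj u v ∧ p u = ↑B ∧ p v = ↑C
  symm := ⟨by rintro B C ⟨hne, u, v, h, hu, hv⟩; exact ⟨hne.symm, v, u, h.symm, hv, hu⟩⟩
  loopless := ⟨by rintro B ⟨hne, -⟩; exact hne rfl⟩

/-- Projection of walks to the quotient graph. -/
lemma quotGraph_walk {T : SimpleGraph α} {σ : Set α} {p : α → α}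
    (hmem : ∀ a, p a ∈ σ) {a b : α} (w : T.Walk a b) :
    ∃ ω : (quotGraph T σ p).Walk ⟨p a, hmem a⟩ ⟨p b, hmem b⟩,
      ∀ C ∈ ω.support, ∃ s ∈ w.support, p s = ↑C := by
  induction w with
  | @nil u =>
    refine ⟨Walk.nil, ?_⟩
    intro C hC
    simp only [Walk.support_nil, List.mem_singleton] at hC
    exact ⟨u, by simp, by rw [hC]⟩
  | @cons a a' b h w' ih =>
    obtain ⟨ω', hω'⟩ := ih
    by_cases hpq : p a = p a'
    · refine ⟨ω'.copy (Subtype.ext hpq).symm rfl, ?_⟩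
      intro C hC
      rw [Walk.support_copy] at hC
      obtain ⟨s, hs1, hs2⟩ := hω' C hC
      exact ⟨s, by simp [hs1], hs2⟩
    · have hadj : (quotGraph T σ p).Adj ⟨p a, hmem a⟩ ⟨p a', hmem a'⟩ :=
        ⟨fun hEq => hpq (congrArg Subtype.val hEq), a, a', h, rfl, rfl⟩
      refine ⟨Walk.cons hadj ω', ?_⟩
      intro C hC
      rw [Walk.support_cons] at hC
      rcases List.mem_cons.mp hC with h1 | h2
      · exact ⟨a, by simp, by rw [h1]⟩
      · obtain ⟨s, hs1, hs2⟩ := hω' C h2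
        exact ⟨s, by simp [hs1], hs2⟩

lemma quotGraph_preconnected {T : SimpleGraph α} {σ : Set α} {p : α → α}
    (hpre : T.Preconnected) (hmem : ∀ a, p a ∈ σ) (hfix : ∀ a ∈ σ, p a = a) :
    (quotGraph T σ p).Preconnected := by
  intro B C
  obtain ⟨w⟩ := hpre ↑B ↑C
  obtain ⟨ω, -⟩ := quotGraph_walk hmem w
  exact ⟨ω.copy (Subtype.ext (hfix _ B.2)) (Subtype.ext (hfix _ C.2))⟩

/-- A walk avoiding an edge gives reachability in the edge-deleted graph. -/
lemma reachable_deleteEdges_of_walk {T : SimpleGraph α} {e : Sym2 α} {a b : α}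
    (w : T.Walk a b) (he : e ∉ w.edges) : (T.deleteEdges {e}).Reachable a b := by
  induction w with
  | nil => exact Reachable.refl _
  | @cons a a' b h w' ih =>
    rw [Walk.edges_cons, List.mem_cons] at he
    push_neg at he
    have hadj : (T.deleteEdges {e}).Adj a a' := by
      rw [SimpleGraph.deleteEdges_adj]
      exact ⟨h, by simp [Ne.symm he.1]⟩
    exact hadj.reachable.trans (ih he.2)

lemma quotGraph_isAcyclic {T : SimpleGraph α} (hac : T.IsAcyclic) {σ : Set α} {p : α → α}
    (hmem : ∀ a, p a ∈ σ) (hfix : ∀ a ∈ σ, p a = a)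
    (hconn : ∀ a, ∃ w : T.Walk a (p a), ∀ s ∈ w.support, p s = p a) :
    (quotGraph T σ p).IsAcyclic := by
  intro B₀ c hc
  cases c with
  | nil => exact hc.ne_nil rfl
  | @cons _ B₁ _ hadj c' =>
    obtain ⟨hne, u₀, v₁, hT, hpu, hpv⟩ := hadj
    have hbr : T.IsBridge s(u₀, v₁) := isAcyclic_iff_forall_adj_isBridge.mp hac hT
    have hnreach : ¬ (T.deleteEdges {s(u₀, v₁)}).Reachable u₀ v₁ := isBridge_iff.mp hbr
    -- vertices in the same fiber are on the same side of the bridge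
    have fiber : ∀ a b : α, p a = p b →
        ((T.deleteEdges {s(u₀, v₁)}).Reachable a u₀ ↔
          (T.deleteEdges {s(u₀, v₁)}).Reachable b u₀) := by
      intro a b hab
      obtain ⟨w₁, hw₁⟩ := hconn a
      obtain ⟨w₂, hw₂⟩ := hconn b
      set w₂c : T.Walk (p a) b := (w₂.reverse.copy hab.symm rfl) with hw₂c
      set w : T.Walk a b := w₁.append w₂c with hw
      have hsup : ∀ s ∈ w.support, p s = p a := by
        intro s hs
        rw [hw, Walk.support_append] at hs
        rcases List.mem_append.mp hs with h1 | h2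
        · exact hw₁ s h1
        · have : s ∈ w₂c.support := List.mem_of_mem_tail h2
          rw [hw₂c, Walk.support_copy, Walk.support_reverse] at this
          rw [hw₂ s (List.mem_reverse.mp this), hab]
      have hedge : s(u₀, v₁) ∉ w.edges := by
        intro hmem'
        have h1 : p u₀ = p a := hsup _ (w.fst_mem_support_of_mem_edges hmem')
        have h2 : p v₁ = p a := hsup _ (w.snd_mem_support_of_mem_edges hmem')
        exact hne (Subtype.ext (hpu ▸ hpv ▸ (h1.trans h2.symm)))
      have hr : (T.deleteEdges {s(u₀, v₁)}).Reachable a b :=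
        reachable_deleteEdges_of_walk w hedge
      exact ⟨fun h => hr.symm.trans h, fun h => hr.trans h⟩
    -- sides of the cycle's first edge
    have hP₀ : (T.deleteEdges {s(u₀, v₁)}).Reachable ↑B₀ u₀ :=
      (fiber ↑B₀ u₀ (by rw [hfix _ B₀.2, hpu])).mpr (Reachable.refl _)
    have hP₁ : ¬ (T.deleteEdges {s(u₀, v₁)}).Reachable ↑B₁ u₀ := by
      intro hreach
      have := (fiber v₁ ↑B₁ (by rw [hfix _ B₁.2, hpv])).mpr hreach
      exact hnreach this.symm
    -- find a crossing edge along the rest of the cycle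
    have find : ∀ {b b' : ↥σ} (ω : (quotGraph T σ p).Walk b b'),
        ¬ (T.deleteEdges {s(u₀, v₁)}).Reachable ↑b u₀ →
        (T.deleteEdges {s(u₀, v₁)}).Reachable ↑b' u₀ →
        ∃ d d', (quotGraph T σ p).Adj d d' ∧
          ¬ (T.deleteEdges {s(u₀, v₁)}).Reachable ↑d u₀ ∧
          (T.deleteEdges {s(u₀, v₁)}).Reachable ↑d' u₀ ∧ s(d, d') ∈ ω.edges := by
      intro b b' ω
      induction ω with
      | nil => intro h1 h2; exact absurd h2 h1
      | @cons b m b' hbm ω' ih =>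
        intro h1 h2
        by_cases hm : (T.deleteEdges {s(u₀, v₁)}).Reachable ↑m u₀
        · exact ⟨b, m, hbm, h1, hm, by simp⟩
        · obtain ⟨d, d', hdd, hnd, hpd, hedge⟩ := ih hm h2
          exact ⟨d, d', hdd, hnd, hpd, by simp [hedge]⟩
    obtain ⟨d, d', hdd, hnd, hpd, hedge⟩ := find c' hP₁ hP₀
    obtain ⟨hne', u, v, hTuv, hpu', hpv'⟩ := hdd
    have hsu : ¬ (T.deleteEdges {s(u₀, v₁)}).Reachable u u₀ := by
      intro hr; exact hnd ((fiber ↑d u (by rw [hfix _ d.2, hpu'])).mpr hr)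
    have hsv : (T.deleteEdges {s(u₀, v₁)}).Reachable v u₀ :=
      (fiber v ↑d' (by rw [hfix _ d'.2, hpv'])).mpr hpd
    -- the crossing edge must be the bridge itself
    have hcross : v = u₀ ∧ u = v₁ := by
      by_cases he : s(v, u) = s(u₀, v₁)
      · rcases Sym2.eq_iff.mp he with ⟨h1, h2⟩ | ⟨h1, h2⟩
        · exact ⟨h1, h2⟩
        · exfalso; subst h1; exact hnreach hsv.symm
      · exfalso
        have hadj' : (T.deleteEdges {s(u₀, v₁)}).Adj v u := by
          rw [SimpleGraph.deleteEdges_adj]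
          exact ⟨hTuv.symm, by simp [he]⟩
        exact hsu (hadj'.symm.reachable.trans hsv)
    have hd' : d' = B₀ := Subtype.ext (by rw [← hpv', hcross.1, hpu])
    have hd : d = B₁ := Subtype.ext (by rw [← hpu', hcross.2, hpv])
    subst hd; subst hd'
    have hnodup := hc.isTrail.edges_nodup
    replace hnodup : (s(d', d) :: c'.edges).Nodup := hnodup
    have := (List.nodup_cons.mp hnodup).1
    rw [Sym2.eq_swap] at hedge
    exact this hedge

/-- The first vertex along a walk not satisfying `Dp` (falling back to the endpoint). -/
def firstOut {β : Type*} {G : SimpleGraph β} (Dp : β → Prop) [DecidablePred Dp] :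
    ∀ {a b : β}, G.Walk a b → β
  | _, b, Walk.nil => b
  | a, _, Walk.cons _ w => if Dp a then firstOut Dp w else a

lemma firstOut_not_mem {β : Type*} {G : SimpleGraph β} (Dp : β → Prop) [DecidablePred Dp] :
    ∀ {a b : β} (w : G.Walk a b), ¬ Dp b → ¬ Dp (firstOut Dp w)
  | _, _, Walk.nil, hb => hb
  | a, _, Walk.cons _ w, hb => by
      simp only [firstOut]
      split
      · exact firstOut_not_mem Dp w hb
      · assumption

lemma firstOut_mem_support {β : Type*} {G : SimpleGraph β} (Dp : β → Prop) [DecidablePred Dp] :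
    ∀ {a b : β} (w : G.Walk a b), firstOut Dp w ∈ w.support
  | _, b, Walk.nil => by simp [firstOut]
  | a, _, Walk.cons _ w => by
      simp only [firstOut]
      split
      · simp [Walk.support_cons, firstOut_mem_support Dp w]
      · simp [Walk.support_cons]

lemma firstOut_eq_self {β : Type*} {G : SimpleGraph β} (Dp : β → Prop) [DecidablePred Dp]
    {a b : β} (w : G.Walk a b) (ha : ¬ Dp a) : firstOut Dp w = a := by
  cases w with
  | nil => rfl
  | cons h w => simp [firstOut, ha]

/-- `AlphaAcyclic` from a join-tree-like structure on a type equivalent to the edge set. -/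
lemma alphaAcyclic_of_graph {E₂ : Set (Set V)} {β : Type*} (Q : SimpleGraph β)
    (e : β ≃ ↥E₂) (hQac : Q.IsAcyclic) (hQpre : Q.Preconnected)
    (hQjoin : ∀ v : V, (Q.induce {a : β | v ∈ ((e a : ↥E₂) : Set V)}).Preconnected) :
    AlphaAcyclic E₂ := by
  refine ⟨SimpleGraph.comap (e.symm : ↥E₂ → β) Q, ?_, ?_, ?_⟩
  · intro b c hc
    have hinj : Function.Injective (e.symm : ↥E₂ → β) := e.symm.injective
    have : (c.map ⟨(e.symm : ↥E₂ → β), fun h => h⟩).IsCycle :=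
      (Walk.map_isCycle_iff_of_injective hinj).mpr hc
    exact hQac _ this
  · intro a b
    obtain ⟨w⟩ := hQpre (e.symm a) (e.symm b)
    let ψ : Q →g SimpleGraph.comap (e.symm : ↥E₂ → β) Q :=
      ⟨fun u => e u, fun {u v} h => by simpa using h⟩
    have hψ : ∀ u, ψ u = e u := fun _ => rfl
    exact ⟨(w.map ψ).copy ((hψ _).trans (e.apply_symm_apply a))
      ((hψ _).trans (e.apply_symm_apply b))⟩
  · intro v A B
    have hA : v ∈ ((e (e.symm ↑A) : ↥E₂) : Set V) := by
      rw [e.apply_symm_apply]; exact A.2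
    have hB : v ∈ ((e (e.symm ↑B) : ↥E₂) : Set V) := by
      rw [e.apply_symm_apply]; exact B.2
    obtain ⟨ω⟩ := hQjoin v ⟨e.symm ↑A, hA⟩ ⟨e.symm ↑B, hB⟩
    obtain ⟨w, hw⟩ := exists_walk_of_induce ω
    let ψ : Q →g SimpleGraph.comap (e.symm : ↥E₂ → β) Q :=
      ⟨fun u => e u, fun {u v} h => by simpa using h⟩
    have hψ : ∀ u, ψ u = e u := fun _ => rfl
    have hsup : ∀ c ∈ (w.map ψ).support, c ∈ {K : ↥E₂ | v ∈ (K : Set V)} := by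
      intro c hc
      rw [Walk.support_map] at hc
      obtain ⟨s, hs, rfl⟩ := List.mem_map.mp hc
      rw [hψ]
      exact hw s hs
    have hr := reachable_induce_of_walk (w.map ψ) hsup
      (by rw [hψ, e.apply_symm_apply]; exact A.2)
      (by rw [hψ, e.apply_symm_apply]; exact B.2)
    have hAe : (⟨ψ (e.symm ↑A), by rw [hψ, e.apply_symm_apply]; exact A.2⟩ :
        ↥{K : ↥E₂ | v ∈ (K : Set V)}) = A :=
      Subtype.ext ((hψ _).trans (e.apply_symm_apply ↑A))
    have hBe : (⟨ψ (e.symm ↑B), by rw [hψ, e.apply_symm_apply]; exact B.2⟩ :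
        ↥{K : ↥E₂ | v ∈ (K : Set V)}) = B :=
      Subtype.ext ((hψ _).trans (e.apply_symm_apply ↑B))
    rw [hAe, hBe] at hr
    exact hr

/-- The empty/singleton hypergraph is α-acyclic. -/
lemma alphaAcyclic_of_subsingleton {E : Set (Set V)} (hE : E.Subsingleton) :
    AlphaAcyclic E := by
  refine ⟨⊥, isAcyclic_bot, ?_, ?_⟩
  · intro a b
    have : a = b := Subtype.ext (hE a.2 b.2)
    exact this ▸ Reachable.refl _
  · intro v a b
    have : a = b := Subtype.ext (Subtype.ext (hE a.1.2 b.1.2))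
    exact this ▸ Reachable.refl _

/-- Coherent routing: every vertex reaches its `firstOut` along the canonical path
through a walk whose support all routes to the same place. -/
lemma exists_coherent_walk {β : Type*} {G : SimpleGraph β} (Dp : β → Prop) [DecidablePred Dp]
    {t : β} (ht : ¬ Dp t) (P : (a : β) → G.Path a t)
    (Puniq : ∀ (a : β) (w : G.Walk a t), w.IsPath → w = (P a).1) :
    ∀ (a : β), ∃ ω : G.Walk a (firstOut Dp (P a).1),
      ∀ s ∈ ω.support, firstOut Dp (P s).1 = firstOut Dp (P a).1 := by
  suffices key : ∀ (n : ℕ) (a : β), (P a).1.length = n →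
      ∃ ω : G.Walk a (firstOut Dp (P a).1),
        ∀ s ∈ ω.support, firstOut Dp (P s).1 = firstOut Dp (P a).1 by
    exact fun a => key _ a rfl
  intro n
  induction n using Nat.strong_induction_on with
  | _ n ih =>
    intro a hlen
    by_cases hA : Dp a
    · cases hval : (P a).1 with
      | nil => exact absurd hA ht
      | @cons _ m _ hadj w' =>
        have hw' : w'.IsPath := by
          have hpa := (P a).2
          rw [hval] at hpa
          exact hpa.of_cons
        have heq' : w' = (P m).1 := Puniq m w' hw'
        have hlen' : (P m).1.length < n := by
          rw [← heq']
          have : (P a).1.length = w'.length + 1 := by rw [hval, Walk.length_cons]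
          omega
        have hpA : firstOut Dp (Walk.cons hadj w') = firstOut Dp (P m).1 := by
          rw [← heq']
          simp [firstOut, hA]
        obtain ⟨ω', hω'⟩ := ih _ hlen' m rfl
        refine ⟨(Walk.cons hadj ω').copy rfl hpA.symm, ?_⟩
        intro s hs
        rw [Walk.support_copy, Walk.support_cons] at hs
        rcases List.mem_cons.mp hs with h1 | h2
        · rw [h1, hval]
        · rw [hω' s h2]
          exact hpA.symm
    · refine ⟨Walk.nil.copy rfl (firstOut_eq_self Dp (P a).1 hA).symm, ?_⟩
      intro s hs
      rw [Walk.support_copy, Walk.support_nil, List.mem_singleton] at hs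
      rw [hs]

/-- Deleting a set `D` of hyperedges, all of whose "shared" vertices lie in a
surviving hyperedge `L`, preserves α-acyclicity. -/
lemma alphaAcyclic_diff_s6 {E D : Set (Set V)} {L : Set V}
    (hL : L ∈ E) (hLD : L ∉ D)
    (hcov : ∀ A ∈ E, A ∈ D → ∀ u ∈ A, (∃ B ∈ E, B ∉ D ∧ u ∈ B) → u ∈ L)
    (h : AlphaAcyclic E) : AlphaAcyclic (E \ D) := by
  classical
  obtain ⟨T, hac, hpre, hjoin⟩ := h
  let Lt : ↥E := ⟨L, hL⟩
  let P : (A : ↥E) → T.Path A Lt := fun A => ((hpre A Lt).some).toPath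
  have Puniq : ∀ (A : ↥E) (w : T.Walk A Lt), w.IsPath → w = (P A).1 := by
    intro A w hw
    have := isAcyclic_iff_path_unique.mp hac (⟨w, hw⟩ : T.Path A Lt) (P A)
    exact congrArg Subtype.val this
  let Dp : ↥E → Prop := fun A => (↑A : Set V) ∈ D
  let p : ↥E → ↥E := fun A => firstOut Dp (P A).1
  have hfix : ∀ A : ↥E, ¬ Dp A → p A = A := fun A hA => firstOut_eq_self Dp (P A).1 hA
  have hLtD : ¬ Dp Lt := hLD
  have hmem : ∀ A : ↥E, ¬ Dp (p A) := fun A => firstOut_not_mem Dp (P A).1 hLtD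
  have hpsup : ∀ A : ↥E, p A ∈ (P A).1.support := fun A => firstOut_mem_support Dp (P A).1
  have hconn : ∀ A : ↥E, ∃ ω : T.Walk A (p A), ∀ s ∈ ω.support, p s = p A :=
    exists_coherent_walk Dp hLtD P Puniq
  let σ : Set ↥E := {A : ↥E | ¬ Dp A}
  have hmem' : ∀ A : ↥E, p A ∈ σ := hmem
  have hfix' : ∀ A ∈ σ, p A = A := fun A hA => hfix A hA
  let Q := quotGraph T σ p
  have hQac : Q.IsAcyclic := quotGraph_isAcyclic hac hmem' hfix' hconn
  have hQpre : Q.Preconnected := quotGraph_preconnected hpre hmem' hfix'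
  have htrans : ∀ (s : ↥E) (v : V), v ∈ (↑s : Set V) →
      (∃ B : ↥E, ¬ Dp B ∧ v ∈ (↑B : Set V)) → v ∈ (↑(p s) : Set V) := by
    intro s v hv hB
    by_cases hs : Dp s
    · obtain ⟨B, hBD, hvB⟩ := hB
      have hvL : v ∈ L := hcov ↑s s.2 hs v hv ⟨↑B, B.2, hBD, hvB⟩
      have hsupp := mem_of_isPath_support hac (hjoin v)
        (show s ∈ {K : ↥E | v ∈ (K : Set V)} from hv)
        (show Lt ∈ {K : ↥E | v ∈ (K : Set V)} from hvL) (P s).2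
      exact hsupp _ (hpsup s)
    · rw [hfix s hs]; exact hv
  let e : ↥σ ≃ ↥(E \ D) :=
    { toFun := fun a => ⟨((a : ↥E) : Set V), by exact ⟨(a : ↥E).2, a.2⟩⟩
      invFun := fun b => ⟨⟨↑b, b.2.1⟩, b.2.2⟩
      left_inv := fun a => Subtype.ext (Subtype.ext rfl)
      right_inv := fun b => Subtype.ext rfl }
  refine alphaAcyclic_of_graph Q e hQac hQpre ?_
  intro v A B
  have hA2 : v ∈ (↑↑(↑A : ↥σ) : Set V) := A.2
  have hB2 : v ∈ (↑↑(↑B : ↥σ) : Set V) := B.2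
  obtain ⟨ω₀⟩ := hjoin v ⟨↑↑(↑A : ↥σ), hA2⟩ ⟨↑↑(↑B : ↥σ), hB2⟩
  obtain ⟨w, hw⟩ := exists_walk_of_induce ω₀
  obtain ⟨ω, hω⟩ := quotGraph_walk hmem' w
  have hsup : ∀ C ∈ ω.support, C ∈ {a : ↥σ | v ∈ ((e a : ↥(E \ D)) : Set V)} := by
    intro C hC
    obtain ⟨s, hs1, hs2⟩ := hω C hC
    have hmC : v ∈ (↑(p s) : Set V) := htrans s v (hw s hs1) ⟨↑(↑A : ↥σ), (↑A : ↥σ).2, hA2⟩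
    rw [hs2] at hmC
    exact hmC
  have hstA : (⟨p ↑↑(↑A : ↥σ), hmem' _⟩ : ↥σ) = ↑A := Subtype.ext (hfix' _ (↑A : ↥σ).2)
  have hstB : (⟨p ↑↑(↑B : ↥σ), hmem' _⟩ : ↥σ) = ↑B := Subtype.ext (hfix' _ (↑B : ↥σ).2)
  have hsup' : ∀ C ∈ (ω.copy hstA hstB).support,
      C ∈ {a : ↥σ | v ∈ ((e a : ↥(E \ D)) : Set V)} := by
    intro C hC
    rw [Walk.support_copy] at hC
    exact hsup C hC
  exact reachable_induce_of_walk (ω.copy hstA hstB) hsup' A.2 B.2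

/-- α-acyclicity transfers along an edge-set bijection that preserves vertex
membership, except possibly at vertices absent from the new hypergraph. -/
lemma alphaAcyclic_congr {E₁ E₂ : Set (Set V)} (e : ↥E₁ ≃ ↥E₂)
    (hv : ∀ v : V, (∀ K : ↥E₁, v ∈ (↑K : Set V) ↔ v ∈ (↑(e K) : Set V)) ∨
      (∀ K₂ : ↥E₂, v ∉ (↑K₂ : Set V)))
    (h : AlphaAcyclic E₁) : AlphaAcyclic E₂ := by
  obtain ⟨T, hac, hpre, hjoin⟩ := h
  refine alphaAcyclic_of_graph T e hac hpre ?_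
  intro v
  rcases hv v with hiff | hnone
  · have hset : {a : ↥E₁ | v ∈ ((e a : ↥E₂) : Set V)} = {a : ↥E₁ | v ∈ (↑a : Set V)} := by
      ext a; exact (hiff a).symm
    rw [hset]; exact hjoin v
  · intro a b
    exact absurd a.2 (hnone (e ↑a))

/-- Transfer of α-acyclicity to the hypergraph obtained by removing a vertex,
given a subfamily `G` on which removing `x` is injective and surjective. -/
lemma alphaAcyclic_removeVertex_of {F G : Set (Set V)} {x : V}
    (hGF : G ⊆ F)
    (hsur : ∀ K ∈ F, K \ {x} ≠ ∅ → ∃ K' ∈ G, K' \ {x} = K \ {x})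
    (hne : ∀ K ∈ G, K \ {x} ≠ ∅)
    (hinj : ∀ K ∈ G, ∀ K' ∈ G, K \ {x} = K' \ {x} → K = K')
    (hG : AlphaAcyclic G) : AlphaAcyclic (removeVertex F x) := by
  have hf : ∀ K : ↥G, (↑K \ {x} : Set V) ∈ removeVertex F x :=
    fun K => ⟨↑K, hGF K.2, rfl, hne ↑K K.2⟩
  let f : ↥G → ↥(removeVertex F x) := fun K => ⟨↑K \ {x}, hf K⟩
  have hbij : Function.Bijective f := by
    constructor
    · intro K K' hKK
      exact Subtype.ext (hinj _ K.2 _ K'.2 (congrArg Subtype.val hKK))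
    · rintro ⟨M, hM⟩
      obtain ⟨K0, hK0F, hMeq, hMne⟩ := hM
      subst hMeq
      obtain ⟨K', hK'G, hK'⟩ := hsur K0 hK0F hMne
      exact ⟨⟨K', hK'G⟩, Subtype.ext hK'⟩
  refine alphaAcyclic_congr (Equiv.ofBijective f hbij) ?_ hG
  intro v
  by_cases hvx : v = x
  · right
    rintro ⟨K₂, N, hN, rfl, hKne⟩ hvK
    subst hvx
    have hvK' : v ∈ N \ {v} := hvK
    simp at hvK'
  · left
    intro K
    have : (↑(Equiv.ofBijective f hbij K) : Set V) = ↑K \ {x} := rfl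
    rw [this]
    simp [hvx]

end Helpers

/-- Removing a signed-leaf (deleting the hyperedges contained in its pivot and then
removing the vertex) preserves signed-acyclicity. -/
theorem signedAcyclic_removeLeaf (Ep En : Set (Set V)) (x : V) (Rx : Set V)
    (hpivot : IsPivot Ep En x Rx)
    (h : SignedAcyclic Ep En) :
    SignedAcyclic (removeLeafPos Ep En x Rx) (removeLeafNeg Ep En x Rx) := by
  classical
  obtain ⟨hRxEp, hxRx, hmax, hchain, hmin⟩ := hpivot
  intro S hS
  let Sx : Set (Set V) := leafSx Ep En Rx
  let S0a : Set (Set V) := {N | N ∈ En ∧ N ∉ Sx ∧ x ∉ N ∧ N ∈ S}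
  let X : Set (Set V) := {M | x ∉ M ∧ (M ∈ Ep \ Sx ∨ M ∈ S0a)}
  let S0b : Set (Set V) := {N | N ∈ En ∧ N ∉ Sx ∧ x ∈ N ∧ N \ {x} ∈ S ∧ N \ {x} ∉ X}
  let S0 : Set (Set V) := S0a ∪ S0b
  have hS0 : S0 ⊆ En := by rintro N (hN | hN); exacts [hN.1, hN.1]
  let F : Set (Set V) := (Ep ∪ S0) \ Sx
  have hRxSx : Rx ∉ Sx := fun hmem => hmem.2.1 rfl
  have hRxF : Rx ∈ F := ⟨Or.inl hRxEp, hRxSx⟩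
  have hFE : F ⊆ Ep ∪ En := by
    rintro K ⟨hK, -⟩
    rcases hK with hK | hK
    exacts [Or.inl hK, Or.inr (hS0 hK)]
  have hsubRx : ∀ K, K ∈ Ep ∪ En → K ⊆ Rx → K ≠ Rx → K ∈ Sx :=
    fun K h1 h2 h3 => ⟨h1, h3, h2⟩
  have hnoempty : ∅ ∉ F := by
    rintro ⟨hmem, hSxmem⟩
    refine hSxmem (hsubRx ∅ ?_ (Set.empty_subset _) ?_)
    · rcases hmem with hm | hm
      exacts [Or.inl hm, Or.inr (hS0 hm)]
    · intro hcontra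
      rw [← hcontra] at hxRx
      exact hxRx
  have hxset : ∀ K ∈ F, K ⊆ {x} → K = Rx := by
    intro K hKF hKsub
    by_contra hne
    rcases Set.subset_singleton_iff_eq.mp hKsub with rfl | rfl
    · exact hnoempty hKF
    · exact hKF.2 (hsubRx {x} (hFE hKF) (Set.singleton_subset_iff.mpr hxRx) hne)
  have hCmem : ∀ K ∈ F, x ∈ K → K ≠ Rx → K ∈ S0b ∧ Rx ⊆ K := by
    intro K hKF hxK hKne
    have hKS0b : K ∈ S0b := by
      rcases hKF.1 with hK | hK | hK
      · exact absurd (hsubRx K (Or.inl hK) (hmax K hK hxK) hKne) hKF.2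
      · exact absurd hxK hK.2.2.1
      · exact hK
    have hnotsub : ¬ K ⊆ Rx := fun hsub => hKF.2 (hsubRx K (Or.inr (hS0 (Or.inr hKS0b))) hsub hKne)
    exact ⟨hKS0b, hmin K (Or.inl ⟨hKS0b.1, hKS0b.2.2.1, hnotsub⟩)⟩
  have hxfreeX : ∀ M ∈ F, x ∉ M → M ∈ X := by
    intro M hMF hxM
    rcases hMF.1 with hM | hM | hM
    · exact ⟨hxM, Or.inl ⟨hM, hMF.2⟩⟩
    · exact ⟨hxM, Or.inr hM⟩
    · exact absurd hM.2.2.1 hxM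
  have hXF : X ⊆ F := by
    rintro M ⟨hxM, hM | hM⟩
    · exact ⟨Or.inl hM.1, hM.2⟩
    · exact ⟨Or.inr (Or.inl hM), hM.2.1⟩
  have hdiffeq : ∀ (K K' : Set V), x ∈ K → x ∈ K' → K \ {x} = K' \ {x} → K = K' := by
    intro K K' h1 h2 heq
    ext a
    by_cases ha : a = x
    · subst ha; exact ⟨fun _ => h2, fun _ => h1⟩
    · constructor
      · intro haK
        have hmem : a ∈ K' \ {x} := heq ▸ (⟨haK, by simp [ha]⟩ : a ∈ K \ {x})
        exact hmem.1
      · intro haK'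
        have hmem : a ∈ K \ {x} := heq.symm ▸ (⟨haK', by simp [ha]⟩ : a ∈ K' \ {x})
        exact hmem.1
  have hnocol : ∀ K ∈ F, x ∈ K → K ≠ Rx → K \ {x} ∉ F := by
    intro K hKF hxK hKne hcontra
    have hKS0b := (hCmem K hKF hxK hKne).1
    exact hKS0b.2.2.2.2 (hxfreeX _ hcontra (by simp))
  have hinj : ∀ (G' : Set (Set V)), G' ⊆ F → (Rx ∈ G' → Rx \ {x} ∉ F) →
      ∀ K ∈ G', ∀ K' ∈ G', K \ {x} = K' \ {x} → K = K' := by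
    intro G' hG'F hG'Rx K hK K' hK' heq
    by_cases h1 : x ∈ K <;> by_cases h2 : x ∈ K'
    · exact hdiffeq K K' h1 h2 heq
    · exfalso
      have hK'eq : K' = K \ {x} := by rw [heq, Set.diff_singleton_eq_self h2]
      by_cases hKRx : K = Rx
      · subst hKRx
        rw [hK'eq] at hK'
        exact hG'Rx hK (hG'F hK')
      · rw [hK'eq] at hK'
        exact hnocol K (hG'F hK) h1 hKRx (hG'F hK')
    · exfalso
      have hKeq : K = K' \ {x} := by rw [← heq, Set.diff_singleton_eq_self h1]
      by_cases hKRx : K' = Rx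
      · subst hKRx
        rw [hKeq] at hK
        exact hG'Rx hK' (hG'F hK)
      · rw [hKeq] at hK
        exact hnocol K' (hG'F hK') h2 hKRx (hG'F hK)
    · rw [← Set.diff_singleton_eq_self h1, ← Set.diff_singleton_eq_self h2, heq]
  have hEeq : removeLeafPos Ep En x Rx ∪ S = removeVertex F x := by
    ext M
    constructor
    · rintro (hM | hM)
      · obtain ⟨K, hK, rfl, hMne⟩ := hM
        exact ⟨K, ⟨Or.inl hK.1, hK.2⟩, rfl, hMne⟩
      · obtain ⟨N, hN, rfl, hMne⟩ := hS hM
        by_cases hxN : x ∈ N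
        · by_cases hX : N \ {x} ∈ X
          · exact ⟨N \ {x}, hXF hX, (Set.diff_singleton_eq_self (by simp)).symm, hMne⟩
          · exact ⟨N, ⟨Or.inr (Or.inr ⟨hN.1, hN.2, hxN, hM, hX⟩), hN.2⟩, rfl, hMne⟩
        · have hNM : N \ {x} = N := Set.diff_singleton_eq_self hxN
          rw [hNM] at hM ⊢
          exact ⟨N, ⟨Or.inr (Or.inl ⟨hN.1, hN.2, hxN, hM⟩), hN.2⟩, hNM.symm, hNM ▸ hMne⟩
    · rintro ⟨K, ⟨hK1, hK2⟩, rfl, hMne⟩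
      rcases hK1 with hK | hK | hK
      · exact Or.inl ⟨K, ⟨hK, hK2⟩, rfl, hMne⟩
      · right
        rw [Set.diff_singleton_eq_self hK.2.2.1]
        exact hK.2.2.2
      · exact Or.inr hK.2.2.2.1
  rw [hEeq]
  have hF : AlphaAcyclic F :=
    alphaAcyclic_diff_s6 (Or.inl hRxEp : Rx ∈ Ep ∪ S0) hRxSx
      (fun A _ hASx u hu _ => hASx.2.2 hu) (h S0 hS0)
  by_cases hcol : Rx \ {x} ∈ F ∨ Rx = {x}
  · -- the pivot collides after removing x; delete it first
    have hLor : (∃ L, L ∈ F ∧ L ≠ Rx ∧ ∀ u ∈ Rx, (∃ B ∈ F, B ≠ Rx ∧ u ∈ B) → u ∈ L) ∨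
        (∀ K ∈ F, K = Rx) := by
      by_cases hKx : ∃ K, K ∈ F ∧ x ∈ K ∧ K ≠ Rx
      · obtain ⟨K, hKF, hxK, hKne⟩ := hKx
        exact Or.inl ⟨K, hKF, hKne, fun u hu _ => (hCmem K hKF hxK hKne).2 hu⟩
      · push_neg at hKx
        by_cases hM : Rx \ {x} ∈ F
        · refine Or.inl ⟨Rx \ {x}, hM, ?_, ?_⟩
          · intro hct
            have hxmem : x ∈ Rx \ {x} := by rw [hct]; exact hxRx
            simp at hxmem
          · rintro u hu ⟨B, hBF, hBne, huB⟩
            refine ⟨hu, ?_⟩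
            intro hux
            have hux' : u = x := hux
            rw [hux'] at huB
            exact hBne (hKx B hBF huB)
        · rcases hcol with hc | hc
          · exact absurd hc hM
          · by_cases hF1 : ∃ Z, Z ∈ F ∧ Z ≠ Rx
            · obtain ⟨Z, hZF, hZne⟩ := hF1
              refine Or.inl ⟨Z, hZF, hZne, ?_⟩
              rintro u hu ⟨B, hBF, hBne, huB⟩
              exfalso
              rw [hc] at hu
              have hux : u = x := hu
              rw [hux] at huB
              exact hBne (hKx B hBF huB)
            · push_neg at hF1
              exact Or.inr hF1
    rcases hLor with ⟨L, hLF, hLne, hLcov⟩ | htriv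
    · have hFD : AlphaAcyclic (F \ {Rx}) := by
        refine alphaAcyclic_diff_s6 hLF (by simp [hLne]) ?_ hF
        intro A hAF hARx u hu hB
        obtain ⟨B, hBF, hBD, huB⟩ := hB
        have hARx' : A = Rx := hARx
        subst hARx'
        exact hLcov u hu ⟨B, hBF, by simpa using hBD, huB⟩
      refine alphaAcyclic_removeVertex_of Set.diff_subset ?_ ?_ ?_ hFD
      · intro K hKF hKne
        by_cases hKRx : K = Rx
        · rcases hcol with hc | hc
          · refine ⟨Rx \ {x}, ⟨hc, ?_⟩, ?_⟩
            · intro hmem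
              have heqm : Rx \ {x} = Rx := hmem
              have hxmem : x ∈ Rx \ {x} := by rw [heqm]; exact hxRx
              simp at hxmem
            · rw [hKRx, Set.diff_singleton_eq_self (by simp)]
          · exfalso
            rw [hKRx, hc] at hKne
            simp at hKne
        · exact ⟨K, ⟨hKF, hKRx⟩, rfl⟩
      · intro K hKG hKe
        have hsub : K ⊆ {x} := Set.diff_eq_empty.mp hKe
        exact hKG.2 (hxset K hKG.1 hsub)
      · exact hinj (F \ {Rx}) Set.diff_subset (fun hmem => absurd rfl (by exact hmem.2))
    · -- degenerate: `F = {Rx}` and `Rx = {x}`, everything disappears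
      refine alphaAcyclic_of_subsingleton ?_
      rintro a ⟨K, hKF, rfl, hane⟩ b ⟨K', hK'F, rfl, hbne⟩
      rw [htriv K hKF, htriv K' hK'F]
  · -- no collision: removing x is injective on all of F
    push_neg at hcol
    refine alphaAcyclic_removeVertex_of (le_refl F) ?_ ?_ ?_ hF
    · exact fun K hK _ => ⟨K, hK, rfl⟩
    · intro K hKF hKe
      have hsub : K ⊆ {x} := Set.diff_eq_empty.mp hKe
      have hKRx : K = Rx := hxset K hKF hsub
      subst hKRx
      exact hcol.2 (Set.Subset.antisymm hsub (Set.singleton_subset_iff.mpr hxRx))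
    · exact hinj F (le_refl F) (fun _ => hcol.1)
end
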